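/- arXiv:2211.06645 — 7 statements merged into one kernel-verified Lean document; each statement's English description precedes it below -/
import Mathlib

section
/- Let K be an algebraically closed field of characteristic 0, g a finite-dimensional simple Lie algebra over K, and V a finite-dimensional g-module. Then a K-linear map D : g → V is a (1/2)-derivation of g with values in V if and only if D is a homomorphism of g-modules from the adjoint module g to V (i.e. D([x,y]) = x • D(y) for all x, y ∈ g). -/
/-- The space of `δ`-derivations of a Lie algebra `L` with values in an `L`-module `V`:
linear maps `D : L → V` with `D ⁅x, y⁆ = δ • (x • D y) - δ • (y • D x)`. -/
def deltaDer (K : Type*) [CommRing K] (L : Type*) [LieRing L] [LieAlgebra K L]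
    (V : Type*) [AddCommGroup V] [Module K V] [LieRingModule L V] [LieModule K L V]
    (δ : K) : Submodule K (L →ₗ[K] V) where
  carrier := {D | ∀ x y : L, D ⁅x, y⁆ = δ • ⁅x, D y⁆ - δ • ⁅y, D x⁆}
  zero_mem' := by intro x y; simp
  add_mem' := by
    intro a b ha hb x y
    simp only [LinearMap.add_apply, ha x y, hb x y, lie_add, smul_add]
    abel
  smul_mem' := by
    intro c a ha x y
    simp only [LinearMap.smul_apply, ha x y, lie_smul, smul_sub, smul_comm c δ]

namespace HalfDerAux

open Module LieModule

variable {K : Type*} [Field K] {L : Type*} [LieRing L] [LieAlgebra K L]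
    {V : Type*} [AddCommGroup V] [Module K V] [LieRingModule L V] [LieModule K L V]

lemma mem_deltaDer_iff {D : L →ₗ[K] V} {δ : K} :
    D ∈ deltaDer K L V δ ↔ ∀ x y : L, D ⁅x, y⁆ = δ • ⁅x, D y⁆ - δ • ⁅y, D x⁆ :=
  Iff.rfl

variable [CharZero K]

lemma two_smul_cancel {u v : V} (h : (2:K) • u = (2:K) • v) : u = v :=
  smul_right_injective V (by norm_num : (2:K) ≠ 0) h

lemma deltaDer_two_smul {E : L →ₗ[K] V} (hE : E ∈ deltaDer K L V (1/2)) (x y : L) :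
    (2:K) • E ⁅x, y⁆ = ⁅x, E y⁆ - ⁅y, E x⁆ := by
  rw [mem_deltaDer_iff] at hE
  rw [hE x y, smul_sub, smul_smul, smul_smul,
    show (2:K) * (1/2) = 1 by norm_num, one_smul, one_smul]

lemma mem_deltaDer_of_two_smul {E : L →ₗ[K] V}
    (h : ∀ x y : L, (2:K) • E ⁅x, y⁆ = ⁅x, E y⁆ - ⁅y, E x⁆) :
    E ∈ deltaDer K L V (1/2) := by
  rw [mem_deltaDer_iff]
  intro x y
  apply two_smul_cancel (K := K)
  rw [h x y, smul_sub, smul_smul, smul_smul,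
    show (2:K) * (1/2) = 1 by norm_num, one_smul, one_smul]

lemma lie_symm {E : L →ₗ[K] V} (hE : E ∈ deltaDer K L V (1/2)) (x y : L) :
    ⁅x, E⁆ y = ⁅y, E⁆ x := by
  have h := deltaDer_two_smul hE x y
  have hyx : E ⁅y, x⁆ = - E ⁅x, y⁆ := by rw [← lie_skew, map_neg]
  simp only [LieHom.lie_apply]
  apply two_smul_cancel (K := K)
  rw [smul_sub, smul_sub, h, hyx, smul_neg, h]
  module

lemma cyclic {E : L →ₗ[K] V} (hE : E ∈ deltaDer K L V (1/2)) (x y z : L) :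
    ⁅⁅x, y⁆, E z⁆ + ⁅⁅y, z⁆, E x⁆ + ⁅⁅z, x⁆, E y⁆ = 0 := by
  have h := deltaDer_two_smul hE
  have jE : E ⁅x, ⁅y, z⁆⁆ + E ⁅y, ⁅z, x⁆⁆ + E ⁅z, ⁅x, y⁆⁆ = 0 := by
    rw [← map_add, ← map_add, lie_jacobi, map_zero]
  have expand : ∀ a b c : L, (2:K) • ((2:K) • E ⁅a, ⁅b, c⁆⁆) =
      ⁅a, ⁅b, E c⁆⁆ - ⁅a, ⁅c, E b⁆⁆ - (2:K) • ⁅⁅b, c⁆, E a⁆ := by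
    intro a b c
    rw [h a ⁅b, c⁆, smul_sub, ← lie_smul, h b c, lie_sub]
  set S := ⁅⁅x, y⁆, E z⁆ + ⁅⁅y, z⁆, E x⁆ + ⁅⁅z, x⁆, E y⁆ with hS
  have final : (2:K) • ((2:K) • (E ⁅x, ⁅y, z⁆⁆ + E ⁅y, ⁅z, x⁆⁆ + E ⁅z, ⁅x, y⁆⁆)) =
      S - (2:K) • S := by
    rw [smul_add, smul_add, smul_add, smul_add, expand x y z, expand y z x, expand z x y, hS]
    simp only [lie_lie]
    module
  rw [jE, smul_zero, smul_zero] at final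
  have h2 : S - (2:K) • S = -S := by module
  rw [h2] at final
  exact neg_eq_zero.mp final.symm

lemma lie_mem_deltaDer {E : L →ₗ[K] V} (hE : E ∈ deltaDer K L V (1/2)) (w : L) :
    ⁅w, E⁆ ∈ deltaDer K L V (1/2) := by
  apply mem_deltaDer_of_two_smul
  intro y z
  apply two_smul_cancel (K := K)
  have h := deltaDer_two_smul hE
  have hc := cyclic hE w y z
  simp only [LieHom.lie_apply]
  have eA : (2:K) • ⁅w, E ⁅y, z⁆⁆ = ⁅w, ⁅y, E z⁆⁆ - ⁅w, ⁅z, E y⁆⁆ := by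
    rw [← lie_smul, h y z, lie_sub]
  have eB : (2:K) • E ⁅w, ⁅y, z⁆⁆ = ⁅w, E ⁅y, z⁆⁆ - ⁅⁅y, z⁆, E w⁆ := h w ⁅y, z⁆
  have eC : (2:K) • ⁅y, E ⁅w, z⁆⁆ = ⁅y, ⁅w, E z⁆⁆ - ⁅y, ⁅z, E w⁆⁆ := by
    rw [← lie_smul, h w z, lie_sub]
  have eD : (2:K) • ⁅z, E ⁅w, y⁆⁆ = ⁅z, ⁅w, E y⁆⁆ - ⁅z, ⁅y, E w⁆⁆ := by
    rw [← lie_smul, h w y, lie_sub]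
  have eU : ⁅⁅y, z⁆, E w⁆ = ⁅y, ⁅z, E w⁆⁆ - ⁅z, ⁅y, E w⁆⁆ := by rw [lie_lie]
  simp only [lie_lie] at hc
  simp only [lie_sub]
  linear_combination (norm := module) eA - (2:K) • eB + eC - eD + hc + (2:K) • eU

omit [CharZero K] in
/-- Evaluation is compatible with generalized eigenspaces. -/
lemma eval_mem_maxGenEigenspace (x : L) {c a : K} {E : L →ₗ[K] V} {z : L}
    (hE : E ∈ (LieModule.toEnd K L (L →ₗ[K] V) x).maxGenEigenspace c)
    (hz : z ∈ (LieModule.toEnd K L L x).maxGenEigenspace a) :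
    E z ∈ (LieModule.toEnd K L V x).maxGenEigenspace (c + a) := by
  rw [Module.End.mem_maxGenEigenspace] at hE hz ⊢
  obtain ⟨p, hp⟩ := hE
  obtain ⟨q, hq⟩ := hz
  set ρ' : Module.End K (L →ₗ[K] V) := LieModule.toEnd K L (L →ₗ[K] V) x - c • 1 with hρ'
  set ad' : Module.End K L := LieModule.toEnd K L L x - a • 1 with had'
  set σ' : Module.End K V := LieModule.toEnd K L V x - (c + a) • 1 with hσ'
  have step : ∀ (F : L →ₗ[K] V) (u : L), σ' (F u) = (ρ' F) u + F (ad' u) := by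
    intro F u
    simp only [hρ', had', hσ', LinearMap.sub_apply, LinearMap.smul_apply, Module.End.one_apply,
      LieModule.toEnd_apply_apply, LieHom.lie_apply, map_sub, map_smul]
    module
  suffices h : ∀ t p q : ℕ, p + q ≤ t → ∀ (F : L →ₗ[K] V) (u : L),
      (ρ' ^ p) F = 0 → (ad' ^ q) u = 0 → (σ' ^ t) (F u) = 0 by
    exact ⟨p + q, h (p + q) p q le_rfl E z hp hq⟩
  intro t
  induction t with
  | zero =>
    intro p q hpq F u hF hu
    obtain ⟨rfl, rfl⟩ : p = 0 ∧ q = 0 := by omega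
    rw [pow_zero, Module.End.one_apply] at hF
    simp [hF]
  | succ t ih =>
    intro p q hpq F u hF hu
    rcases Nat.eq_zero_or_pos p with rfl | hp0
    · rw [pow_zero, Module.End.one_apply] at hF
      simp [hF]
    rcases Nat.eq_zero_or_pos q with rfl | hq0
    · rw [pow_zero, Module.End.one_apply] at hu
      simp [hu]
    obtain ⟨p', rfl⟩ := Nat.exists_eq_succ_of_ne_zero (by omega : p ≠ 0)
    obtain ⟨q', rfl⟩ := Nat.exists_eq_succ_of_ne_zero (by omega : q ≠ 0)
    rw [pow_succ, Module.End.mul_apply, step, map_add]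
    have h1 : (σ' ^ t) ((ρ' F) u) = 0 := by
      refine ih p' (q' + 1) (by omega) (ρ' F) u ?_ hu
      rw [← Module.End.mul_apply, ← pow_succ]
      exact hF
    have h2 : (σ' ^ t) (F (ad' u)) = 0 := by
      refine ih (p' + 1) q' (by omega) F (ad' u) hF ?_
      rw [← Module.End.mul_apply, ← pow_succ]
      exact hu
    rw [h1, h2, add_zero]


section Main

set_option linter.unusedSectionVars false

open Module

/-- A `ℚ`-linear functional on `K` not vanishing on a given finite set of nonzero elements. -/
lemma exists_functional (S : Finset K) (hS : (0:K) ∉ S) :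
    ∃ ℓ : K →ₗ[ℚ] ℚ, ∀ v ∈ S, ℓ v ≠ 0 := by
  classical
  induction S using Finset.induction_on with
  | empty => exact ⟨0, by simp⟩
  | @insert v S hvS ih =>
    have hv0 : v ≠ 0 := fun h => hS (h ▸ Finset.mem_insert_self v S)
    obtain ⟨ℓ, hℓ⟩ := ih (fun h => hS (Finset.mem_insert_of_mem h))
    have : ¬ ∀ φ : Module.Dual ℚ K, φ v = 0 := by
      rw [Module.forall_dual_apply_eq_zero_iff]; exact hv0
    push_neg at this
    obtain ⟨ψ, hψ⟩ := this
    set B : Finset ℚ := insert 0 ((insert v S).image (fun w => -(ℓ w)/(ψ w))) with hB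
    obtain ⟨q, hq⟩ := Infinite.exists_notMem_finset B
    have hq0 : q ≠ 0 := fun h => hq (h ▸ Finset.mem_insert_self 0 _)
    refine ⟨ℓ + q • ψ, ?_⟩
    intro w hw
    simp only [LinearMap.add_apply, LinearMap.smul_apply, smul_eq_mul]
    by_cases hψw : ψ w = 0
    · have hwS : w ∈ S := by
        rcases Finset.mem_insert.mp hw with rfl | h
        · exact absurd hψw hψ
        · exact h
      simp [hψw, hℓ w hwS]
    · intro hcon
      apply hq
      rw [hB]
      apply Finset.mem_insert_of_mem
      apply Finset.mem_image.mpr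
      refine ⟨w, hw, ?_⟩
      field_simp
      linarith [hcon]

variable [IsAlgClosed K] [FiniteDimensional K L] [FiniteDimensional K V]
    [LieAlgebra.IsSimple K L]

lemma perfect : ⁅(⊤ : LieIdeal K L), (⊤ : LieIdeal K L)⁆ = ⊤ := by
  rcases LieAlgebra.IsSimple.eq_bot_or_eq_top (⁅(⊤ : LieIdeal K L), ⊤⁆ : LieIdeal K L) with h | h
  · exfalso
    apply LieAlgebra.IsSimple.non_abelian (R := K) (L := L)
    constructor
    intro u v
    have huv : (⁅u, v⁆ : L) ∈ (⁅(⊤ : LieIdeal K L), ⊤⁆ : LieIdeal K L) :=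
      LieSubmodule.lie_mem_lie trivial trivial
    rw [h] at huv
    simpa using huv
  · exact h

lemma not_isNilpotent : ¬ ∃ k, lowerCentralSeries K L L k = ⊥ := by
  intro h
  obtain ⟨k, hk⟩ := h
  have htop : ∀ k, lowerCentralSeries K L L k = ⊤ := by
    intro k
    induction k with
    | zero => rfl
    | succ n ih => rw [LieModule.lowerCentralSeries_succ, ih]; exact perfect
  have hnt : Nontrivial L := by
    by_contra hcon
    rw [not_nontrivial_iff_subsingleton] at hcon
    exact LieAlgebra.IsSimple.non_abelian (R := K) (L := L) ⟨fun u v => Subsingleton.elim _ _⟩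
  obtain ⟨u, v, huv⟩ := hnt
  apply huv
  have h1 : u - v ∈ lowerCentralSeries K L L k := by rw [htop]; trivial
  rw [hk, LieSubmodule.mem_bot, sub_eq_zero] at h1
  exact h1

lemma hasEigenvalue_of_mem_maxGen {W : Type*} [AddCommGroup W] [Module K W]
    {f : Module.End K W} {μ : K} {w : W} (hw : w ∈ f.maxGenEigenspace μ) (h0 : w ≠ 0) :
    f.HasEigenvalue μ := by
  rw [Module.End.mem_maxGenEigenspace] at hw
  obtain ⟨k, hk⟩ := hw
  apply Module.End.hasEigenvalue_of_hasGenEigenvalue (k := k)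
  rw [Module.End.hasGenEigenvalue_iff]
  intro hbot
  apply h0
  have hmem : w ∈ f.genEigenspace μ k := by
    rw [Module.End.mem_genEigenspace_nat]; exact hk
  rw [hbot] at hmem
  simpa using hmem

lemma engel_eq_maxGen (x : L) :
    (LieSubalgebra.engel K x).toSubmodule =
      Module.End.maxGenEigenspace (LieModule.toEnd K L L x) 0 := by
  ext y
  rw [LieSubalgebra.mem_toSubmodule, LieSubalgebra.mem_engel_iff,
    Module.End.mem_maxGenEigenspace]
  simp only [zero_smul, sub_zero]
  rfl

lemma coe_restrict_pow {W : Type*} [AddCommGroup W] [Module K W]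
    {f : Module.End K W} {p : Submodule K W} (hf : ∀ w ∈ p, f w ∈ p) (μ : K) (k : ℕ)
    (e : p) :
    ((((f.restrict hf) - μ • 1) ^ k) e : W) = ((f - μ • 1) ^ k) (e : W) := by
  induction k generalizing e with
  | zero => simp
  | succ k ih =>
    have hstep : ∀ e' : p, ((((f.restrict hf) - μ • 1)) e' : W) = (f - μ • 1) (e' : W) := by
      intro e'
      simp [LinearMap.restrict_apply, LinearMap.sub_apply, LinearMap.smul_apply]
    rw [pow_succ', pow_succ', Module.End.mul_apply, Module.End.mul_apply, hstep, ih]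

/-- The central spectral lemma: any `1/2`-derivation lying in a generalized eigenspace of the
action of `x` (whose Engel subalgebra is Cartan) for a nonzero eigenvalue vanishes. -/
lemma spec_zero (x : L) (hx : (LieSubalgebra.engel K x).IsCartanSubalgebra)
    (c : K) (hc : c ≠ 0) :
    ∀ E ∈ deltaDer K L V (1/2),
      E ∈ (LieModule.toEnd K L (L →ₗ[K] V) x).maxGenEigenspace c → E = 0 := by
  classical
  by_contra hcon
  push_neg at hcon
  obtain ⟨E₀, hE₀N, hE₀c, hE₀ne⟩ := hcon
  set adx : Module.End K L := LieModule.toEnd K L L x with hadx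
  set ρ : Module.End K (L →ₗ[K] V) := LieModule.toEnd K L (L →ₗ[K] V) x with hρ
  set σV : Module.End K V := LieModule.toEnd K L V x with hσV
  set SN : Set K := {c' | ∃ F, F ∈ deltaDer K L V (1/2) ∧ F ∈ ρ.maxGenEigenspace c' ∧ F ≠ 0}
    with hSNdef
  have hSNfin : SN.Finite := by
    apply Set.Finite.subset (Module.End.finite_hasEigenvalue ρ)
    rintro c' ⟨F, hFN, hFc, hF0⟩
    exact hasEigenvalue_of_mem_maxGen hFc hF0
  set SA : Set K := {a | adx.maxGenEigenspace a ≠ ⊥} with hSAdef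
  have hSAfin : SA.Finite := by
    apply Set.Finite.subset (Module.End.finite_hasEigenvalue adx)
    intro a ha
    obtain ⟨w, hw, hw0⟩ := Submodule.ne_bot_iff _ |>.mp ha
    exact hasEigenvalue_of_mem_maxGen hw hw0
  -- choice of a rational functional
  have h0S : (0:K) ∉ insert c (hSAfin.toFinset.erase 0) := by
    intro hmem
    rcases Finset.mem_insert.mp hmem with h | h
    · exact hc h.symm
    · exact Finset.notMem_erase 0 _ h
  obtain ⟨ℓ₀, hℓ₀⟩ := exists_functional (insert c (hSAfin.toFinset.erase 0)) h0S
  have hℓ₀c : ℓ₀ c ≠ 0 := hℓ₀ c (Finset.mem_insert_self _ _)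
  have hmain : ∃ ℓ : K →ₗ[ℚ] ℚ, 0 < ℓ c ∧ ∀ a ∈ SA, a ≠ 0 → ℓ a ≠ 0 := by
    have hSAprop : ∀ (ℓ' : K →ₗ[ℚ] ℚ), (∀ v ∈ insert c (hSAfin.toFinset.erase 0), ℓ' v ≠ 0) →
        ∀ a ∈ SA, a ≠ 0 → ℓ' a ≠ 0 := by
      intro ℓ' h a haSA ha0
      exact h a (Finset.mem_insert_of_mem (Finset.mem_erase.mpr ⟨ha0, hSAfin.mem_toFinset.mpr haSA⟩))
    rcases hℓ₀c.lt_or_gt with hneg | hpos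
    · refine ⟨-ℓ₀, by simpa using hneg, ?_⟩
      intro a ha h0
      simpa using hSAprop ℓ₀ hℓ₀ a ha h0
    · exact ⟨ℓ₀, hpos, hSAprop ℓ₀ hℓ₀⟩
  obtain ⟨ℓ, hℓc, hℓSA⟩ := hmain
  have hcSN : c ∈ SN := ⟨E₀, hE₀N, hE₀c, hE₀ne⟩
  have hTne : hSNfin.toFinset.Nonempty := ⟨c, hSNfin.mem_toFinset.mpr hcSN⟩
  obtain ⟨cm, hcmT, hcmmax⟩ := Finset.exists_max_image hSNfin.toFinset (fun a => ℓ a) hTne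
  have hcmSN : cm ∈ SN := hSNfin.mem_toFinset.mp hcmT
  have hcmmax' : ∀ c' ∈ SN, ℓ c' ≤ ℓ cm := fun c' h => hcmmax c' (hSNfin.mem_toFinset.mpr h)
  have hcm_pos : 0 < ℓ cm := lt_of_lt_of_le hℓc (hcmmax' c hcSN)
  have hcm_ne : cm ≠ 0 := by rintro rfl; simp at hcm_pos
  -- Step 1 : positive root vectors annihilate the top slice
  have hS1 : ∀ a : K, 0 < ℓ a → ∀ z ∈ adx.maxGenEigenspace a,
      ∀ F, F ∈ deltaDer K L V (1/2) → F ∈ ρ.maxGenEigenspace cm → ⁅z, F⁆ = 0 := by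
    intro a ha z hz F hFN hFc
    by_contra hne
    have hmem : ⁅z, F⁆ ∈ ρ.maxGenEigenspace (a + cm) :=
      LieModule.lie_mem_maxGenEigenspace_toEnd hz hFc
    have hSNmem : (a + cm) ∈ SN := ⟨⁅z, F⁆, lie_mem_deltaDer hFN z, hmem, hne⟩
    have hle := hcmmax' _ hSNmem
    rw [map_add] at hle
    linarith
  -- Step 2 : top slice elements vanish on positive eigenspaces
  have hS2 : ∀ a : K, 0 < ℓ a → ∀ F, F ∈ deltaDer K L V (1/2) → F ∈ ρ.maxGenEigenspace cm →
      ∀ k : ℕ, ∀ z : L, ((adx - a • 1) ^ k) z = 0 → F z = 0 := by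
    intro a ha F hFN hFc k
    induction k with
    | zero =>
      intro z hz
      rw [pow_zero, Module.End.one_apply] at hz
      simp [hz]
    | succ k ih =>
      intro z hz
      have hzmem : z ∈ adx.maxGenEigenspace a := by
        rw [Module.End.mem_maxGenEigenspace]; exact ⟨k + 1, hz⟩
      have hlie : ⁅z, F⁆ = 0 := hS1 a ha z hzmem F hFN hFc
      have h13 : ∀ y : L, F ⁅y, z⁆ = ⁅y, F z⁆ := by
        intro y
        have hsymm := lie_symm hFN y z
        rw [hlie] at hsymm
        simp only [LieHom.lie_apply, LinearMap.zero_apply] at hsymm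
        exact (sub_eq_zero.mp hsymm).symm
      have hz' : F ((adx - a • 1) z) = 0 := by
        apply ih
        rw [← Module.End.mul_apply, ← pow_succ]
        exact hz
      have hadxz : adx z = ⁅x, z⁆ := LieModule.toEnd_apply_apply K L L x z
      have hdecomp : adx z = a • z + (adx - a • 1) z := by
        simp only [LinearMap.sub_apply, LinearMap.smul_apply, Module.End.one_apply]
        abel
      have hkey : σV (F z) = a • F z := by
        have h1 : σV (F z) = F (adx z) := by
          rw [hσV, LieModule.toEnd_apply_apply, ← h13 x, hadxz]
        rw [h1, hdecomp, map_add, map_smul, hz', add_zero]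
      have m1 : F z ∈ σV.maxGenEigenspace a := by
        rw [Module.End.mem_maxGenEigenspace]
        refine ⟨1, ?_⟩
        rw [pow_one, LinearMap.sub_apply, LinearMap.smul_apply, Module.End.one_apply, hkey,
          sub_self]
      have m2 : F z ∈ σV.maxGenEigenspace (cm + a) := eval_mem_maxGenEigenspace x hFc hzmem
      have hane : a ≠ cm + a := fun h => hcm_ne (right_eq_add.mp h)
      have hdisj := (Module.End.independent_maxGenEigenspace σV).pairwiseDisjoint hane
      exact (Submodule.disjoint_def.mp hdisj) (F z) m1 m2
  -- Step 3
  have hS3 : ∀ a : K, 0 < ℓ a → ∀ z ∈ adx.maxGenEigenspace a,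
      ∀ F, F ∈ deltaDer K L V (1/2) → F ∈ ρ.maxGenEigenspace cm → ∀ y : L, F ⁅y, z⁆ = 0 := by
    intro a ha z hz F hFN hFc y
    have hlie : ⁅z, F⁆ = 0 := hS1 a ha z hz F hFN hFc
    have h13 : F ⁅y, z⁆ = ⁅y, F z⁆ := by
      have hsymm := lie_symm hFN y z
      rw [hlie] at hsymm
      simp only [LieHom.lie_apply, LinearMap.zero_apply] at hsymm
      exact (sub_eq_zero.mp hsymm).symm
    obtain ⟨k, hk⟩ := Module.End.mem_maxGenEigenspace _ _ _ |>.mp hz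
    rw [h13, hS2 a ha F hFN hFc k z hk, lie_zero]
  -- the subspace C spanned by brackets of opposite eigenvectors
  set C : Submodule K L := Submodule.span K
      {m | ∃ a : K, a ≠ 0 ∧ ∃ z ∈ adx.maxGenEigenspace a, ∃ y ∈ adx.maxGenEigenspace (-a),
        m = ⁅y, z⁆} with hCdef
  have hFC : ∀ F, F ∈ deltaDer K L V (1/2) → F ∈ ρ.maxGenEigenspace cm →
      ∀ m ∈ C, F m = 0 := by
    intro F hFN hFc m hm
    induction hm using Submodule.span_induction with
    | mem m hgen =>
      obtain ⟨a, ha0, z, hz, y, hy, rfl⟩ := hgen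
      by_cases hA : adx.maxGenEigenspace a = ⊥
      · rw [hA, Submodule.mem_bot] at hz
        rw [hz, lie_zero, map_zero]
      · have hla := hℓSA a hA ha0
        rcases hla.lt_or_gt with hneg | hpos
        · have hpos' : 0 < ℓ (-a) := by rw [map_neg]; linarith
          have h0 := hS3 (-a) hpos' y hy F hFN hFc z
          rw [← lie_skew y z, map_neg, h0, neg_zero]
        · exact hS3 a hpos z hz F hFN hFc y
    | zero => rw [map_zero]
    | add u v hu hv hu' hv' => rw [map_add, hu', hv', add_zero]
    | smul t u hu hu' => rw [map_smul, hu', smul_zero]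
  -- the graded decomposition of L coming from perfectness
  set D0 : Submodule K L := Submodule.span K
      {m | ∃ p ∈ adx.maxGenEigenspace 0, ∃ q ∈ adx.maxGenEigenspace 0, m = ⁅p, q⁆} with hD0def
  set Moff : Submodule K L := ⨆ (b : K) (_ : b ≠ 0), adx.maxGenEigenspace b with hMoffdef
  have hgr : ∀ (a b : K), ∀ p ∈ adx.maxGenEigenspace a, ∀ q ∈ adx.maxGenEigenspace b,
      ⁅p, q⁆ ∈ D0 ⊔ C ⊔ Moff := by
    intro a b p hp q hq
    by_cases hab : a + b = 0
    · by_cases ha0 : a = 0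
      · have hb0 : b = 0 := by rw [ha0, zero_add] at hab; exact hab
        subst ha0; subst hb0
        exact Submodule.mem_sup_left (Submodule.mem_sup_left
          (Submodule.subset_span ⟨p, hp, q, hq, rfl⟩))
      · have hb0 : b ≠ 0 := fun h => ha0 (by rw [h, add_zero] at hab; exact hab)
        have hamb : a = -b := eq_neg_of_add_eq_zero_left hab
        apply Submodule.mem_sup_left
        apply Submodule.mem_sup_right
        apply Submodule.subset_span
        exact ⟨b, hb0, q, hq, p, by rw [← hamb]; exact hp, rfl⟩
    · apply Submodule.mem_sup_right
      have hmem : ⁅p, q⁆ ∈ adx.maxGenEigenspace (a + b) :=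
        LieModule.lie_mem_maxGenEigenspace_toEnd hp hq
      exact Submodule.mem_iSup_of_mem (a + b) (Submodule.mem_iSup_of_mem hab hmem)
  have hbr : ∀ u v : L, ⁅u, v⁆ ∈ D0 ⊔ C ⊔ Moff := by
    intro u v
    have hu : u ∈ ⨆ a : K, adx.maxGenEigenspace a := by
      rw [Module.End.iSup_maxGenEigenspace_eq_top]; trivial
    refine Submodule.iSup_induction _ (motive := fun w => ⁅w, v⁆ ∈ D0 ⊔ C ⊔ Moff) hu ?_ ?_ ?_
    · intro a p hp
      have hv : v ∈ ⨆ b : K, adx.maxGenEigenspace b := by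
        rw [Module.End.iSup_maxGenEigenspace_eq_top]; trivial
      refine Submodule.iSup_induction _ (motive := fun w => ⁅p, w⁆ ∈ D0 ⊔ C ⊔ Moff) hv ?_ ?_ ?_
      · intro b q hq
        exact hgr a b p hp q hq
      · show ⁅p, (0:L)⁆ ∈ D0 ⊔ C ⊔ Moff
        rw [lie_zero]; exact Submodule.zero_mem _
      · intro m₁ m₂ h1 h2
        show ⁅p, m₁ + m₂⁆ ∈ D0 ⊔ C ⊔ Moff
        rw [lie_add]; exact Submodule.add_mem _ h1 h2
    · show ⁅(0:L), v⁆ ∈ D0 ⊔ C ⊔ Moff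
      rw [zero_lie]; exact Submodule.zero_mem _
    · intro u₁ u₂ h1 h2
      show ⁅u₁ + u₂, v⁆ ∈ D0 ⊔ C ⊔ Moff
      rw [add_lie]; exact Submodule.add_mem _ h1 h2
  have htop : (⊤ : Submodule K L) ≤ D0 ⊔ C ⊔ Moff := by
    intro w hw
    have hw' : w ∈ (⁅(⊤ : LieIdeal K L), (⊤ : LieIdeal K L)⁆ : LieIdeal K L) := by
      rw [perfect]; trivial
    rw [← LieSubmodule.mem_toSubmodule, LieSubmodule.lieIdeal_oper_eq_linear_span'] at hw'
    clear hw
    induction hw' using Submodule.span_induction with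
    | mem m hgen =>
      obtain ⟨u, -, v, -, rfl⟩ := hgen
      exact hbr u v
    | zero => exact Submodule.zero_mem _
    | add u v hu hv hu' hv' => exact Submodule.add_mem (D0 ⊔ C ⊔ Moff) hu' hv'
    | smul t u hu hu' => exact Submodule.smul_mem (D0 ⊔ C ⊔ Moff) t hu'

  have hD0le : D0 ≤ adx.maxGenEigenspace 0 := by
    rw [hD0def]
    apply Submodule.span_le.mpr
    rintro m ⟨p, hp, q, hq, rfl⟩
    have := LieModule.lie_mem_maxGenEigenspace_toEnd hp hq
    simpa using this
  have hCle : C ≤ adx.maxGenEigenspace 0 := by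
    rw [hCdef]
    apply Submodule.span_le.mpr
    rintro m ⟨a, ha0, z, hz, y, hy, rfl⟩
    have := LieModule.lie_mem_maxGenEigenspace_toEnd hy hz
    simpa using this
  have hdisj : Disjoint (adx.maxGenEigenspace 0) Moff :=
    (Module.End.independent_maxGenEigenspace adx) 0
  have hL0eq : adx.maxGenEigenspace 0 ≤ D0 ⊔ C := by
    have h1 : adx.maxGenEigenspace 0 = adx.maxGenEigenspace 0 ⊓ (D0 ⊔ C ⊔ Moff) :=
      (inf_eq_left.mpr (le_trans le_top htop)).symm
    have h2 : adx.maxGenEigenspace 0 ⊓ (D0 ⊔ C ⊔ Moff)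
        = adx.maxGenEigenspace 0 ⊓ (Moff ⊔ (D0 ⊔ C)) := by rw [sup_comm (D0 ⊔ C) Moff]
    have h3 : adx.maxGenEigenspace 0 ⊓ Moff ⊔ (D0 ⊔ C)
        = adx.maxGenEigenspace 0 ⊓ (Moff ⊔ (D0 ⊔ C)) :=
      inf_sup_assoc_of_le _ (sup_le hD0le hCle)
    rw [h1, h2, ← h3, hdisj.eq_bot, bot_sup_eq]
  -- stability of C under bracketing with the zero eigenspace
  have hCstab : ∀ p ∈ adx.maxGenEigenspace 0, ∀ m ∈ C, ⁅p, m⁆ ∈ C := by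
    intro p hp m hm
    induction hm using Submodule.span_induction with
    | mem m hgen =>
      obtain ⟨a, ha0, z, hz, y, hy, rfl⟩ := hgen
      rw [leibniz_lie]
      apply Submodule.add_mem
      · apply Submodule.subset_span
        refine ⟨a, ha0, z, hz, ⁅p, y⁆, ?_, rfl⟩
        have := LieModule.lie_mem_maxGenEigenspace_toEnd hp hy
        simpa using this
      · apply Submodule.subset_span
        refine ⟨a, ha0, ⁅p, z⁆, ?_, y, hy, rfl⟩
        have := LieModule.lie_mem_maxGenEigenspace_toEnd hp hz
        simpa using this
    | zero => rw [lie_zero]; exact Submodule.zero_mem _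
    | add u v hu hv hu' hv' => rw [lie_add]; exact Submodule.add_mem _ hu' hv'
    | smul t u hu hu' => rw [lie_smul]; exact Submodule.smul_mem _ t hu'
  -- nilpotency of the Engel subalgebra
  have hEngel := engel_eq_maxGen (K := K) x
  have hHnil : LieRing.IsNilpotent (LieSubalgebra.engel K x) := hx.nilpotent
  obtain ⟨k₀, hk₀⟩ := (LieModule.isNilpotent_iff K (LieSubalgebra.engel K x) (LieSubalgebra.engel K x)).mp hHnil
  set H := LieSubalgebra.engel K x with hHdef
  set Q : ℕ → Submodule K L := fun k =>
    Submodule.map (H.incl : H →ₗ[K] L)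
      (lowerCentralSeries K H H k : Submodule K H) with hQdef
  have hQ0 : adx.maxGenEigenspace 0 ≤ Q 0 := by
    intro w hw
    have hwH : w ∈ H := by
      rw [← LieSubalgebra.mem_toSubmodule, hHdef, hEngel]; exact hw
    exact ⟨⟨w, hwH⟩, by simp, rfl⟩
  have hQsucc : ∀ k : ℕ, ∀ u : H, ∀ n ∈ Q k, ⁅(u : L), n⁆ ∈ Q (k + 1) := by
    intro k u n hn
    obtain ⟨n', hn', rfl⟩ := hn
    refine ⟨⁅u, n'⁆, ?_, ?_⟩
    · rw [LieModule.lowerCentralSeries_succ]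
      exact LieSubmodule.lie_mem_lie trivial hn'
    · simp
  have hQiter : ∀ k : ℕ, adx.maxGenEigenspace 0 ≤ C ⊔ Q k := by
    intro k
    induction k with
    | zero => exact le_trans hQ0 le_sup_right
    | succ k ih =>
      refine le_trans hL0eq ?_
      apply sup_le ?_ le_sup_left
      rw [hD0def]
      apply Submodule.span_le.mpr
      rintro m ⟨p, hp, q, hq, rfl⟩
      have hq' : q ∈ C ⊔ Q k := ih hq
      obtain ⟨qc, hqc, qq, hqq, rfl⟩ := Submodule.mem_sup.mp hq'
      rw [lie_add]
      apply Submodule.add_mem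
      · exact Submodule.mem_sup_left (hCstab p hp qc hqc)
      · apply Submodule.mem_sup_right
        have hpH : p ∈ H := by
          rw [← LieSubalgebra.mem_toSubmodule, hHdef, hEngel]; exact hp
        exact hQsucc k ⟨p, hpH⟩ qq hqq
  have hL0C : adx.maxGenEigenspace 0 ≤ C := by
    have h := hQiter k₀
    have hQbot : Q k₀ = ⊥ := by
      rw [hQdef]
      simp only [hk₀]
      simp
    rwa [hQbot, sup_bot_eq] at h
  -- Step 4 : top slice elements vanish at x
  have hxmem : x ∈ adx.maxGenEigenspace 0 := by
    rw [Module.End.mem_maxGenEigenspace]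
    refine ⟨1, ?_⟩
    simp [hadx, LieModule.toEnd_apply_apply]
  have hS4 : ∀ F, F ∈ deltaDer K L V (1/2) → F ∈ ρ.maxGenEigenspace cm → F x = 0 :=
    fun F hFN hFc => hFC F hFN hFc x (hL0C hxmem)
  -- Step 5 : exact eigenvectors in the top slice vanish
  have hS5 : ∀ F, F ∈ deltaDer K L V (1/2) → F ∈ ρ.maxGenEigenspace cm →
      ρ F = cm • F → F = 0 := by
    intro F hFN hFc hexact
    have hFx : F x = 0 := hS4 F hFN hFc
    have h20 : ∀ z : L, F ⁅x, z⁆ = cm • F z := by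
      intro z
      have hsym := lie_symm hFN z x
      have h1 : ⁅z, F⁆ x = F ⁅x, z⁆ := by
        simp only [LieHom.lie_apply, hFx, lie_zero, zero_sub]
        rw [← lie_skew x z, map_neg]
      have h2 : ⁅x, F⁆ z = cm • F z := by
        have hxF : (⁅x, F⁆ : L →ₗ[K] V) = cm • F := by
          rw [← LieModule.toEnd_apply_apply K L (L →ₗ[K] V) x F, ← hρ, hexact]
        rw [hxF, LinearMap.smul_apply]
      rw [← h1, hsym, h2]
    have hb : ∀ b : K, ∀ k : ℕ, ∀ z : L, ((adx - b • 1) ^ k) z = 0 → F z = 0 := by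
      intro b
      by_cases hbc : b = cm
      · subst hbc
        exact fun k z hz => hS2 b hcm_pos F hFN hFc k z hz
      · intro k
        induction k with
        | zero =>
          intro z hz
          rw [pow_zero, Module.End.one_apply] at hz
          simp [hz]
        | succ k ih =>
          intro z hz
          have hz' : F ((adx - b • 1) z) = 0 := by
            apply ih
            rw [← Module.End.mul_apply, ← pow_succ]
            exact hz
          have hadxz : adx z = ⁅x, z⁆ := LieModule.toEnd_apply_apply K L L x z
          have hdecomp : adx z = b • z + (adx - b • 1) z := by
            simp only [LinearMap.sub_apply, LinearMap.smul_apply, Module.End.one_apply]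
            abel
          have hzero : (cm - b) • F z = 0 := by
            have h3 : F (adx z) = cm • F z := by rw [hadxz]; exact h20 z
            rw [hdecomp, map_add, map_smul, hz', add_zero] at h3
            rw [sub_smul, ← h3, sub_self]
          rcases smul_eq_zero.mp hzero with h | h
          · exact absurd (sub_eq_zero.mp h).symm hbc
          · exact h
      -- (order of cases as above)
    ext z
    have hz : z ∈ ⨆ b : K, adx.maxGenEigenspace b := by
      rw [Module.End.iSup_maxGenEigenspace_eq_top]; trivial
    rw [LinearMap.zero_apply]
    refine Submodule.iSup_induction _ (motive := fun w => F w = 0) hz ?_ ?_ ?_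
    · intro b w hw
      obtain ⟨k, hk⟩ := Module.End.mem_maxGenEigenspace _ _ _ |>.mp hw
      exact hb b k w hk
    · exact map_zero F
    · intro w₁ w₂ h1 h2
      rw [map_add, h1, h2, add_zero]
  -- Step 6 : the whole generalized eigenspace for cm vanishes
  have hS6 : ∀ k : ℕ, ∀ F, F ∈ deltaDer K L V (1/2) → ((ρ - cm • 1) ^ k) F = 0 → F = 0 := by
    intro k
    induction k with
    | zero =>
      intro F hFN hF
      rw [pow_zero, Module.End.one_apply] at hF
      exact hF
    | succ k ih =>
      intro F hFN hF
      have hF'N : (ρ - cm • 1) F ∈ deltaDer K L V (1/2) := by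
        have h1 : ρ F ∈ deltaDer K L V (1/2) := by
          rw [hρ, LieModule.toEnd_apply_apply]
          exact lie_mem_deltaDer hFN x
        have h2 : ((cm • 1 : Module.End K (L →ₗ[K] V))) F ∈ deltaDer K L V (1/2) := by
          rw [LinearMap.smul_apply, Module.End.one_apply]
          exact Submodule.smul_mem _ cm hFN
        rw [LinearMap.sub_apply]
        exact Submodule.sub_mem _ h1 h2
      have hF' : (ρ - cm • 1) F = 0 := by
        apply ih _ hF'N
        rw [← Module.End.mul_apply, ← pow_succ]
        exact hF
      have hexact : ρ F = cm • F := by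
        rw [LinearMap.sub_apply, LinearMap.smul_apply, Module.End.one_apply, sub_eq_zero] at hF'
        exact hF'
      have hFc : F ∈ ρ.maxGenEigenspace cm := by
        rw [Module.End.mem_maxGenEigenspace]
        exact ⟨k + 1, hF⟩
      exact hS5 F hFN hFc hexact
  -- conclusion
  obtain ⟨Fm, hFmN, hFmc, hFmne⟩ := hcmSN
  obtain ⟨k, hk⟩ := Module.End.mem_maxGenEigenspace _ _ _ |>.mp hFmc
  exact hFmne (hS6 k Fm hFmN hk)

end Main

end HalfDerAux

/-- for a finite-dimensional simple Lie algebra `L` over an algebraically closed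
field of characteristic zero and a finite-dimensional `L`-module `V`, a linear map `D : L → V`
is a `(1/2)`-derivation if and only if it is a homomorphism of `L`-modules from the adjoint
module to `V`. -/
theorem halfDerivation_iff_moduleHom
    (K : Type*) [Field K] [IsAlgClosed K] [CharZero K]
    (L : Type*) [LieRing L] [LieAlgebra K L] [FiniteDimensional K L]
    [LieAlgebra.IsSimple K L]
    (V : Type*) [AddCommGroup V] [Module K V] [LieRingModule L V] [LieModule K L V]
    [FiniteDimensional K V]
    (D : L →ₗ[K] V) :
    D ∈ deltaDer K L V (1 / 2) ↔ ∀ x y : L, D ⁅x, y⁆ = ⁅x, D y⁆ := by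
  constructor
  · intro hD
    -- the hard direction
    obtain ⟨x, hx⟩ := LieAlgebra.exists_isCartanSubalgebra_engel K L
    by_cases hnil : ∀ a : K, a ≠ 0 →
        Module.End.maxGenEigenspace (LieModule.toEnd K L L x) a = ⊥
    · -- then `ad x` is nilpotent, `engel K x = ⊤` and `L` is nilpotent: contradiction
      exfalso
      have hLa0 : Module.End.maxGenEigenspace (LieModule.toEnd K L L x) 0 = ⊤ := by
        apply le_antisymm le_top
        rw [← Module.End.iSup_maxGenEigenspace_eq_top (LieModule.toEnd K L L x)]
        apply iSup_le
        intro a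
        by_cases ha : a = 0
        · subst ha; exact le_rfl
        · rw [hnil a ha]; exact bot_le
      have htopeq : LieSubalgebra.engel K x = ⊤ := by
        apply LieSubalgebra.toSubmodule_injective
        rw [LieSubalgebra.top_toSubmodule]
        rw [show ((LieSubalgebra.engel K x : LieSubalgebra K L) : Submodule K L)
          = Module.End.maxGenEigenspace (LieModule.toEnd K L L x) 0 from
          HalfDerAux.engel_eq_maxGen x]
        exact hLa0
      rw [htopeq] at hx
      have h1 : LieRing.IsNilpotent (⊤ : LieSubalgebra K L) := hx.nilpotent
      have h2 : LieRing.IsNilpotent L := by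
        refine (Equiv.lieModule_isNilpotent_iff
          (LieSubalgebra.topEquiv (R := K) (L := L))
          (LieSubalgebra.topEquiv (R := K) (L := L)).toLinearEquiv ?_).mp h1
        intro u m
        simp [LieSubalgebra.topEquiv_apply]
      exact HalfDerAux.not_isNilpotent ((LieModule.isNilpotent_iff K L L).mp h2)
    · push_neg at hnil
      obtain ⟨a, ha0, haA⟩ := hnil
      have hstab : ∀ F ∈ deltaDer K L V (1/2),
          (LieModule.toEnd K L (L →ₗ[K] V) x) F ∈ deltaDer K L V (1/2) := by
        intro F hF
        rw [LieModule.toEnd_apply_apply]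
        exact HalfDerAux.lie_mem_deltaDer hF x
      -- every half-derivation lies in the generalized 0-eigenspace
      have hN0 : ∀ F, F ∈ deltaDer K L V (1/2) →
          F ∈ (LieModule.toEnd K L (L →ₗ[K] V) x).maxGenEigenspace 0 := by
        intro F hF
        have main : ∀ e : deltaDer K L V (1/2),
            (e : L →ₗ[K] V) ∈ (LieModule.toEnd K L (L →ₗ[K] V) x).maxGenEigenspace 0 := by
          intro e
          set fN : Module.End K (deltaDer K L V (1/2)) :=
            (LieModule.toEnd K L (L →ₗ[K] V) x).restrict hstab with hfN
          have hdec := Module.End.iSup_maxGenEigenspace_eq_top fN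
          have hmem : e ∈ ⨆ μ, fN.maxGenEigenspace μ := by
            rw [hdec]; trivial
          refine Submodule.iSup_induction _
            (motive := fun e : deltaDer K L V (1/2) =>
              (e : L →ₗ[K] V) ∈ (LieModule.toEnd K L (L →ₗ[K] V) x).maxGenEigenspace 0)
            hmem ?_ ?_ ?_
          · intro μ e he
            obtain ⟨k, hk⟩ := Module.End.mem_maxGenEigenspace _ _ _ |>.mp he
            have hco : ((LieModule.toEnd K L (L →ₗ[K] V) x - μ • 1) ^ k) (e : L →ₗ[K] V) = 0 := by
              have hcoe := HalfDerAux.coe_restrict_pow hstab μ k e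
              rw [← hfN, hk] at hcoe
              simpa using hcoe.symm
            by_cases hμ : μ = 0
            · subst hμ
              rw [Module.End.mem_maxGenEigenspace]
              exact ⟨k, hco⟩
            · have he0 : (e : L →ₗ[K] V) = 0 := by
                apply HalfDerAux.spec_zero x hx μ hμ _ e.2
                rw [Module.End.mem_maxGenEigenspace]
                exact ⟨k, hco⟩
              rw [he0]
              exact Submodule.zero_mem _
          · show ((0 : deltaDer K L V (1/2)) : L →ₗ[K] V) ∈ _
            rw [ZeroMemClass.coe_zero]
            exact Submodule.zero_mem _
          · intro e₁ e₂ h1 h2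
            show ((e₁ + e₂ : deltaDer K L V (1/2)) : L →ₗ[K] V) ∈ _
            rw [Submodule.coe_add]
            exact Submodule.add_mem _ h1 h2
        exact main ⟨F, hF⟩
      -- vectors in nonzero eigenspaces annihilate all half-derivations
      have hkill : ∀ z ∈ (LieModule.toEnd K L L x).maxGenEigenspace a,
          ∀ F ∈ deltaDer K L V (1/2), ⁅z, F⁆ = 0 := by
        intro z hz F hF
        apply HalfDerAux.spec_zero x hx a ha0 _ (HalfDerAux.lie_mem_deltaDer hF z)
        have := LieModule.lie_mem_maxGenEigenspace_toEnd hz (hN0 F hF)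
        simpa using this
      -- the annihilator ideal
      set I : LieIdeal K L :=
        { carrier := {w : L | ∀ F ∈ deltaDer K L V (1/2), ⁅w, F⁆ = 0}
          add_mem' := by
            intro u v hu hv F hF
            rw [add_lie, hu F hF, hv F hF, add_zero]
          zero_mem' := by
            intro F hF
            rw [zero_lie]
          smul_mem' := by
            intro t w hw F hF
            rw [smul_lie, hw F hF, smul_zero]
          lie_mem := by
            intro y w hw F hF
            rw [lie_lie, hw F hF, lie_zero, hw _ (HalfDerAux.lie_mem_deltaDer hF y), zero_sub,
              neg_zero] } with hIdef
      have hImem : ∀ w : L, w ∈ I ↔ ∀ F ∈ deltaDer K L V (1/2), ⁅w, F⁆ = 0 := fun w => Iff.rfl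
      have hIne : I ≠ ⊥ := by
        obtain ⟨z, hz, hz0⟩ := Submodule.ne_bot_iff _ |>.mp haA
        intro hbot
        have hzI : z ∈ I := (hImem z).mpr (hkill z hz)
        rw [hbot, LieSubmodule.mem_bot] at hzI
        exact hz0 hzI
      have hItop : I = ⊤ := (LieAlgebra.IsSimple.eq_bot_or_eq_top I).resolve_left hIne
      intro u v
      have hu : u ∈ I := by rw [hItop]; trivial
      have h0 : (⁅u, D⁆ : L →ₗ[K] V) v = 0 := by rw [(hImem u).mp hu D hD]; rfl
      rw [LieHom.lie_apply] at h0
      exact (sub_eq_zero.mp h0).symm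
  · intro h
    rw [HalfDerAux.mem_deltaDer_iff]
    intro u v
    have h2 : D ⁅v, u⁆ = - D ⁅u, v⁆ := by rw [← lie_skew v u, map_neg]
    rw [← h u v, ← h v u, h2]
    module
end

section
/- Let L₁ and L₂ be Lie algebras over a field K, let V be a module over the direct sum Lie algebra L₁ ⊕ L₂ (so V is simultaneously an L₁-module and an L₂-module with commuting actions), and let δ ∈ K be nonzero. Then the map sending D ∈ Der_δ(L₁ ⊕ L₂, V) to the pair (D|_{L₁}, D|_{L₂}) of its restrictions is a K-linear isomorphism from Der_δ(L₁ ⊕ L₂, V) onto the subspace of pairs (D₁, D₂) ∈ Der_δ(L₁,V) × Der_δ(L₂,V) satisfying x₁ • D₂(x₂) = x₂ • D₁(x₁) for all x₁ ∈ L₁ and x₂ ∈ L₂. -/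
section ProdLie

variable (K : Type*) [CommRing K] (L₁ L₂ : Type*) [LieRing L₁] [LieAlgebra K L₁]
  [LieRing L₂] [LieAlgebra K L₂]

/-- The direct sum of two Lie algebras, with the componentwise bracket. -/
instance Prod.instLieRing : LieRing (L₁ × L₂) where
  bracket x y := (⁅x.1, y.1⁆, ⁅x.2, y.2⁆)
  add_lie x y z := Prod.ext (add_lie x.1 y.1 z.1) (add_lie x.2 y.2 z.2)
  lie_add x y z := Prod.ext (lie_add x.1 y.1 z.1) (lie_add x.2 y.2 z.2)
  lie_self x := Prod.ext (lie_self x.1) (lie_self x.2)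
  leibniz_lie x y z := Prod.ext (leibniz_lie x.1 y.1 z.1) (leibniz_lie x.2 y.2 z.2)

@[simp] lemma Prod.lie_def' (x y : L₁ × L₂) : ⁅x, y⁆ = (⁅x.1, y.1⁆, ⁅x.2, y.2⁆) := rfl

instance Prod.instLieAlgebra : LieAlgebra K (L₁ × L₂) where
  lie_smul c x y := Prod.ext (lie_smul c x.1 y.1) (lie_smul c x.2 y.2)

variable (V : Type*) [AddCommGroup V] [Module K V]
  [LieRingModule L₁ V] [LieModule K L₁ V] [LieRingModule L₂ V] [LieModule K L₂ V]

/-- `δ`-derivations of the direct sum Lie algebra `L₁ ⊕ L₂` with values in `V`, where `V`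
is simultaneously an `L₁`- and an `L₂`-module, and `(x₁, x₂) ∈ L₁ ⊕ L₂` acts on `v ∈ V` by
`⁅x₁, v⁆ + ⁅x₂, v⁆`. -/
def deltaDerSum (δ : K) : Submodule K ((L₁ × L₂) →ₗ[K] V) where
  carrier := {D | ∀ x y : L₁ × L₂, D ⁅x, y⁆ =
      δ • (⁅x.1, D y⁆ + ⁅x.2, D y⁆) - δ • (⁅y.1, D x⁆ + ⁅y.2, D x⁆)}
  zero_mem' := by intro x y; simp
  add_mem' := by
    intro a b ha hb x y
    simp only [LinearMap.add_apply, ha x y, hb x y, lie_add, smul_add]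
    abel
  smul_mem' := by
    intro c a ha x y
    simp only [LinearMap.smul_apply, ha x y, lie_smul, smul_sub, smul_add, smul_comm c δ]

/-- The subspace of pairs `(D₁, D₂) ∈ Der_δ(L₁,V) × Der_δ(L₂,V)` satisfying the compatibility
condition `x₁ • D₂(x₂) = x₂ • D₁(x₁)`. -/
def compatPairs (δ : K) :
    Submodule K (↥(deltaDer K L₁ V δ) × ↥(deltaDer K L₂ V δ)) where
  carrier := {p | ∀ (x₁ : L₁) (x₂ : L₂),
      ⁅x₁, (p.2 : L₂ →ₗ[K] V) x₂⁆ = ⁅x₂, (p.1 : L₁ →ₗ[K] V) x₁⁆}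
  zero_mem' := by intro x₁ x₂; simp
  add_mem' := by
    intro a b ha hb x₁ x₂
    simp only [Prod.fst_add, Prod.snd_add, Submodule.coe_add, LinearMap.add_apply, lie_add,
      ha x₁ x₂, hb x₁ x₂]
  smul_mem' := by
    intro c a ha x₁ x₂
    simp only [Prod.smul_fst, Prod.smul_snd, SetLike.val_smul, LinearMap.smul_apply, lie_smul,
      ha x₁ x₂]

end ProdLie

/-- for a nonzero `δ`, restriction to the two summands yields a linear isomorphism
from `Der_δ(L₁ ⊕ L₂, V)` onto the subspace of compatible pairs in `Der_δ(L₁,V) × Der_δ(L₂,V)`. -/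
theorem deltaDerSum_equiv_compatPairs
    (K : Type*) [Field K] (L₁ L₂ : Type*) [LieRing L₁] [LieAlgebra K L₁]
    [LieRing L₂] [LieAlgebra K L₂]
    (V : Type*) [AddCommGroup V] [Module K V]
    [LieRingModule L₁ V] [LieModule K L₁ V] [LieRingModule L₂ V] [LieModule K L₂ V]
    (hcomm : ∀ (x₁ : L₁) (x₂ : L₂) (v : V), ⁅x₁, ⁅x₂, v⁆⁆ = ⁅x₂, ⁅x₁, v⁆⁆)
    (δ : K) (hδ : δ ≠ 0) :
    ∃ e : ↥(deltaDerSum K L₁ L₂ V δ) ≃ₗ[K] ↥(compatPairs K L₁ L₂ V δ),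
      ∀ D : ↥(deltaDerSum K L₁ L₂ V δ),
        ((e D : ↥(deltaDer K L₁ V δ) × ↥(deltaDer K L₂ V δ)).1 : L₁ →ₗ[K] V)
            = (D : (L₁ × L₂) →ₗ[K] V) ∘ₗ LinearMap.inl K L₁ L₂ ∧
        ((e D : ↥(deltaDer K L₁ V δ) × ↥(deltaDer K L₂ V δ)).2 : L₂ →ₗ[K] V)
            = (D : (L₁ × L₂) →ₗ[K] V) ∘ₗ LinearMap.inr K L₁ L₂ := by
  have mem1 : ∀ D : ↥(deltaDerSum K L₁ L₂ V δ),
      ((D : (L₁ × L₂) →ₗ[K] V) ∘ₗ LinearMap.inl K L₁ L₂) ∈ deltaDer K L₁ V δ := by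
    intro D x y
    have h := D.2 (x, (0 : L₂)) (y, (0 : L₂))
    simp only [Prod.lie_def', lie_zero, zero_lie, lie_self] at h ⊢
    simpa using h
  have mem2 : ∀ D : ↥(deltaDerSum K L₁ L₂ V δ),
      ((D : (L₁ × L₂) →ₗ[K] V) ∘ₗ LinearMap.inr K L₁ L₂) ∈ deltaDer K L₂ V δ := by
    intro D x y
    have h := D.2 ((0 : L₁), x) ((0 : L₁), y)
    simp only [Prod.lie_def', lie_zero, zero_lie, lie_self] at h ⊢
    simpa using h
  have compat : ∀ D : ↥(deltaDerSum K L₁ L₂ V δ), ∀ (x₁ : L₁) (x₂ : L₂),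
      ⁅x₁, (D : (L₁ × L₂) →ₗ[K] V) (0, x₂)⁆ = ⁅x₂, (D : (L₁ × L₂) →ₗ[K] V) (x₁, 0)⁆ := by
    intro D x₁ x₂
    have h := D.2 (x₁, (0 : L₂)) ((0 : L₁), x₂)
    have h0 : ((⁅x₁, (0 : L₁)⁆, ⁅(0 : L₂), x₂⁆) : L₁ × L₂) = 0 := by simp
    have hz : (D : (L₁ × L₂) →ₗ[K] V) ((0 : L₁), (0 : L₂)) = 0 := by
      rw [show (((0 : L₁), (0 : L₂)) : L₁ × L₂) = 0 from rfl, map_zero]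
    rw [Prod.lie_def'] at h
    simp only [h0, map_zero, hz, lie_zero, zero_lie, add_zero, zero_add] at h
    have h' : δ • ⁅x₁, (D : (L₁ × L₂) →ₗ[K] V) (0, x₂)⁆
        = δ • ⁅x₂, (D : (L₁ × L₂) →ₗ[K] V) (x₁, 0)⁆ := by
      rw [← sub_eq_zero, ← h]
    exact smul_right_injective V hδ h'
  have mem_back : ∀ p : ↥(compatPairs K L₁ L₂ V δ),
      ((p.1.1 : L₁ →ₗ[K] V) ∘ₗ LinearMap.fst K L₁ L₂
        + (p.1.2 : L₂ →ₗ[K] V) ∘ₗ LinearMap.snd K L₁ L₂) ∈ deltaDerSum K L₁ L₂ V δ := by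
    rintro ⟨⟨D₁, D₂⟩, hp⟩ x y
    simp only [LinearMap.add_apply, LinearMap.comp_apply, LinearMap.fst_apply,
      LinearMap.snd_apply, Prod.lie_def', D₁.2 x.1 y.1, D₂.2 x.2 y.2, lie_add, smul_add,
      smul_sub]
    have h1 : ⁅x.1, (D₂ : L₂ →ₗ[K] V) y.2⁆ = ⁅y.2, (D₁ : L₁ →ₗ[K] V) x.1⁆ := hp x.1 y.2
    have h2 : ⁅y.1, (D₂ : L₂ →ₗ[K] V) x.2⁆ = ⁅x.2, (D₁ : L₁ →ₗ[K] V) y.1⁆ := hp y.1 x.2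
    rw [h1, h2]
    abel
  refine ⟨{ toFun := fun D => ⟨(⟨_, mem1 D⟩, ⟨_, mem2 D⟩), fun x₁ x₂ => compat D x₁ x₂⟩
            invFun := fun p => ⟨_, mem_back p⟩
            map_add' := ?_
            map_smul' := ?_
            left_inv := ?_
            right_inv := ?_ }, fun D => ⟨rfl, rfl⟩⟩
  · intro D E
    apply Subtype.ext
    refine Prod.ext (Subtype.ext ?_) (Subtype.ext ?_) <;> ext x <;> rfl
  · intro c D
    apply Subtype.ext
    refine Prod.ext (Subtype.ext ?_) (Subtype.ext ?_) <;> ext x <;> rfl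
  · intro D
    apply Subtype.ext
    refine LinearMap.ext fun x => ?_
    show (D : (L₁ × L₂) →ₗ[K] V) (x.1, 0) + (D : (L₁ × L₂) →ₗ[K] V) (0, x.2)
        = (D : (L₁ × L₂) →ₗ[K] V) x
    rw [← map_add]
    congr 1
    simp
  · rintro ⟨⟨D₁, D₂⟩, hp⟩
    apply Subtype.ext
    refine Prod.ext (Subtype.ext ?_) (Subtype.ext ?_) <;> ext x
    · show (D₁ : L₁ →ₗ[K] V) x + (D₂ : L₂ →ₗ[K] V) 0 = (D₁ : L₁ →ₗ[K] V) x
      simp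
    · show (D₁ : L₁ →ₗ[K] V) 0 + (D₂ : L₂ →ₗ[K] V) x = (D₂ : L₂ →ₗ[K] V) x
      simp
end

section
/- Let L₁ and L₂ be perfect Lie algebras over a field K, let V₁ be an irreducible L₁-module and V₂ an irreducible L₂-module, regard V₁ ⊗ V₂ as a module over the direct sum Lie algebra L₁ ⊕ L₂, and let δ ∈ K with δ ≠ 1. If both V₁ and V₂ are nontrivial modules, or both V₁ and V₂ are trivial one-dimensional modules, then Der_δ(L₁ ⊕ L₂, V₁ ⊗ V₂) = 0. -/
open scoped TensorProduct

section ProdLie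

variable (K : Type*) [CommRing K] (L₁ L₂ : Type*) [LieRing L₁] [LieAlgebra K L₁]
  [LieRing L₂] [LieAlgebra K L₂]

variable (V₁ V₂ : Type*) [AddCommGroup V₁] [Module K V₁] [LieRingModule L₁ V₁]
  [LieModule K L₁ V₁] [AddCommGroup V₂] [Module K V₂] [LieRingModule L₂ V₂] [LieModule K L₂ V₂]

/-- The action of `(x₁, x₂) ∈ L₁ ⊕ L₂` on the tensor product `V₁ ⊗ V₂` of an `L₁`-module `V₁`
and an `L₂`-module `V₂`: `x₁` acts on the first tensor factor and `x₂` on the second. -/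
noncomputable def sumActT (x : L₁ × L₂) : V₁ ⊗[K] V₂ →ₗ[K] V₁ ⊗[K] V₂ :=
  LinearMap.rTensor V₂ (LieModule.toEnd K L₁ V₁ x.1) +
    LinearMap.lTensor V₁ (LieModule.toEnd K L₂ V₂ x.2)

/-- `δ`-derivations of the direct sum Lie algebra `L₁ ⊕ L₂` with values in `V₁ ⊗ V₂`. -/
noncomputable def deltaDerSumTensor (δ : K) :
    Submodule K ((L₁ × L₂) →ₗ[K] V₁ ⊗[K] V₂) where
  carrier := {D | ∀ x y : L₁ × L₂, D ⁅x, y⁆ =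
      δ • sumActT K L₁ L₂ V₁ V₂ x (D y) - δ • sumActT K L₁ L₂ V₁ V₂ y (D x)}
  zero_mem' := by intro x y; simp
  add_mem' := by
    intro a b ha hb x y
    simp only [LinearMap.add_apply, ha x y, hb x y, map_add, smul_add]
    abel
  smul_mem' := by
    intro c a ha x y
    simp only [LinearMap.smul_apply, ha x y, map_smul, smul_sub, smul_comm c δ]

end ProdLie

section AuxSeparation

open LinearMap

variable {K : Type*} [Field K] {V W : Type*} [AddCommGroup V] [Module K V]
    [AddCommGroup W] [Module K W]

/-- Separation lemma: if a family of endomorphisms of `V` has trivial joint kernel, then the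
joint kernel of the induced endomorphisms `f ⊗ 1` of `V ⊗ W` is also trivial. -/
lemma tensor_ker_aux {ι : Type*} (F : ι → (V →ₗ[K] V))
    (hF : ∀ v : V, (∀ i, F i v = 0) → v = 0)
    (w : V ⊗[K] W) (hw : ∀ i, rTensor W (F i) w = 0) : w = 0 := by
  classical
  let b := Module.Basis.ofVectorSpace K W
  let E : V ⊗[K] W ≃ₗ[K] (_ →₀ V) :=
    (TensorProduct.congr (LinearEquiv.refl K V) b.repr).trans
      (TensorProduct.finsuppScalarRight K K V _)
  have hcoord : ∀ (u : V ⊗[K] W) j, E u j = TensorProduct.rid K V (lTensor V (b.coord j) u) := by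
    intro u j
    induction u using TensorProduct.induction_on with
    | zero => simp
    | tmul v x => simp [E, TensorProduct.finsuppScalarRight_apply_tmul_apply, Module.Basis.coord_apply]
    | add a c ha hc => simp [map_add, ha, hc]
  have hcomm : ∀ (f : V →ₗ[K] V) (φ : W →ₗ[K] K) (u : V ⊗[K] W),
      TensorProduct.rid K V (lTensor V φ (rTensor W f u)) =
        f (TensorProduct.rid K V (lTensor V φ u)) := by
    intro f φ u
    induction u using TensorProduct.induction_on with
    | zero => simp
    | tmul v x => simp [TensorProduct.smul_tmul']
    | add a c ha hc => simp [map_add, ha, hc]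
  have : E w = 0 := by
    ext j
    rw [hcoord]
    refine hF _ fun i => ?_
    rw [← hcomm, hw i]
    simp
  exact (LinearEquiv.map_eq_zero_iff E).mp this

lemma comm_lTensor (f : W →ₗ[K] W) (u : V ⊗[K] W) :
    TensorProduct.comm K V W (lTensor V f u) = rTensor V f (TensorProduct.comm K V W u) := by
  induction u using TensorProduct.induction_on with
  | zero => simp
  | tmul v x => simp
  | add a c ha hc => simp [map_add, ha, hc]

lemma tensor_ker_aux' {ι : Type*} (F : ι → (W →ₗ[K] W))
    (hF : ∀ v : W, (∀ i, F i v = 0) → v = 0)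
    (w : V ⊗[K] W) (hw : ∀ i, lTensor V (F i) w = 0) : w = 0 := by
  have h := tensor_ker_aux F hF (TensorProduct.comm K V W w)
    (fun i => by rw [← comm_lTensor, hw i, map_zero])
  exact (LinearEquiv.map_eq_zero_iff _).mp h

end AuxSeparation

/-- A linear map on a perfect Lie algebra that kills all brackets is zero. -/
lemma perfect_vanish {K : Type*} [Field K] {L : Type*} [LieRing L] [LieAlgebra K L]
    (hL : ⁅(⊤ : LieIdeal K L), (⊤ : LieIdeal K L)⁆ = ⊤)
    {M : Type*} [AddCommGroup M] [Module K M] (f : L →ₗ[K] M)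
    (hf : ∀ x y : L, f ⁅x, y⁆ = 0) : f = 0 := by
  have hspan : Submodule.span K {m : L | ∃ x ∈ (⊤ : LieIdeal K L), ∃ n ∈ (⊤ : LieIdeal K L),
      ⁅x, n⁆ = m} = ⊤ := by
    rw [← LieSubmodule.lieIdeal_oper_eq_linear_span', hL]
    rfl
  have : (⊤ : Submodule K L) ≤ LinearMap.ker f := by
    rw [← hspan, Submodule.span_le]
    rintro m ⟨x, -, n, -, rfl⟩
    exact hf x n
  ext x
  simpa using this (Submodule.mem_top (x := x))

/-- In a nontrivial irreducible Lie module, only `0` is annihilated by every element. -/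
lemma irreducible_nontrivial_ker {K : Type*} [Field K] {L : Type*} [LieRing L] [LieAlgebra K L]
    {V : Type*} [AddCommGroup V] [Module K V] [LieRingModule L V] [LieModule K L V]
    [LieModule.IsIrreducible K L V] (h : ¬ LieModule.IsTrivial L V) :
    ∀ v : V, (∀ x : L, ⁅x, v⁆ = 0) → v = 0 := by
  rcases eq_bot_or_eq_top (LieModule.maxTrivSubmodule K L V) with hb | ht
  · intro v hv
    have hmem : v ∈ LieModule.maxTrivSubmodule K L V :=
      (LieModule.mem_maxTrivSubmodule K L V v).mpr hv
    rw [hb] at hmem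
    exact hmem
  · exact absurd ⟨fun x m => (LieModule.mem_maxTrivSubmodule K L V m).mp
      (ht ▸ LieSubmodule.mem_top m) x⟩ h

section AuxProd

open LinearMap

variable (K : Type*) [Field K] (L₁ L₂ : Type*) [LieRing L₁] [LieAlgebra K L₁]
  [LieRing L₂] [LieAlgebra K L₂]
  (V₁ V₂ : Type*) [AddCommGroup V₁] [Module K V₁] [LieRingModule L₁ V₁]
  [LieModule K L₁ V₁] [AddCommGroup V₂] [Module K V₂] [LieRingModule L₂ V₂] [LieModule K L₂ V₂]

local notation "A" => sumActT K L₁ L₂ V₁ V₂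

lemma sumActT_lie (x y : L₁ × L₂) :
    A ⁅x, y⁆ = A x ∘ₗ A y - A y ∘ₗ A x := by
  have h1 : ⁅x, y⁆ = (⁅x.1, y.1⁆, ⁅x.2, y.2⁆) := rfl
  rw [h1]
  unfold sumActT
  simp only [LieHom.map_lie, Ring.lie_def]
  simp only [Module.End.mul_eq_comp, rTensor_sub, lTensor_sub, rTensor_comp, lTensor_comp]
  ext v w
  simp [rTensor_comp_lTensor, lTensor_comp_rTensor, TensorProduct.map_tmul, sub_sub]
  abel

lemma sumActT_inl (a : L₁) (w : V₁ ⊗[K] V₂) :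
    A (a, 0) w = rTensor V₂ (LieModule.toEnd K L₁ V₁ a) w := by
  unfold sumActT
  simp

lemma sumActT_inr (b : L₂) (w : V₁ ⊗[K] V₂) :
    A (0, b) w = lTensor V₁ (LieModule.toEnd K L₂ V₂ b) w := by
  unfold sumActT
  simp

lemma sumActT_zero (w : V₁ ⊗[K] V₂) : A 0 w = 0 := by
  have : (0 : L₁ × L₂) = ((0 : L₁), (0 : L₂)) := rfl
  rw [this, sumActT_inl]
  simp

/-- The key identity for `δ`-derivations with `δ ∉ {0, 1}`. -/
lemma star_identity (δ : K) (hδ0 : δ ≠ 0) (hδ1 : δ ≠ 1)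
    (D : (L₁ × L₂) →ₗ[K] V₁ ⊗[K] V₂)
    (hD : ∀ x y : L₁ × L₂, D ⁅x, y⁆ = δ • A x (D y) - δ • A y (D x))
    (x y z : L₁ × L₂) :
    A ⁅x, y⁆ (D z) = A ⁅x, z⁆ (D y) - A ⁅y, z⁆ (D x) := by
  have hbr : ∀ p q r : L₁ × L₂, A ⁅p, q⁆ (D r)
      = A p (A q (D r)) - A q (A p (D r)) := by
    intro p q r
    rw [sumActT_lie]
    simp
  have E : D ⁅⁅x, y⁆, z⁆ = D ⁅x, ⁅y, z⁆⁆ - D ⁅y, ⁅x, z⁆⁆ := by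
    rw [← map_sub, ← lie_lie]
  rw [hD ⁅x,y⁆ z, hD x ⁅y,z⁆, hD y ⁅x,z⁆, hD x y, hD y z, hD x z] at E
  simp only [map_sub, map_smul, hbr] at E
  rw [hbr, hbr, hbr]
  have key : δ • ((1 - δ) • ((A x (A y (D z)) - A y (A x (D z))) -
      ((A x (A z (D y)) - A z (A x (D y))) -
        (A y (A z (D x)) - A z (A y (D x)))))) = 0 := by
    linear_combination (norm := module) E
  rw [smul_eq_zero] at key
  rcases key with h | h
  · exact absurd h hδ0
  rw [smul_eq_zero] at h
  rcases h with h | h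
  · exact absurd (sub_eq_zero.mp h).symm hδ1
  · exact sub_eq_zero.mp h

variable {K L₁ L₂}

/-- A linear map on the product of two perfect Lie algebras killing all brackets is zero. -/
lemma prod_perfect_vanish
    (hL₁ : ⁅(⊤ : LieIdeal K L₁), (⊤ : LieIdeal K L₁)⁆ = ⊤)
    (hL₂ : ⁅(⊤ : LieIdeal K L₂), (⊤ : LieIdeal K L₂)⁆ = ⊤)
    {M : Type*} [AddCommGroup M] [Module K M] (f : (L₁ × L₂) →ₗ[K] M)
    (hf : ∀ x y : L₁ × L₂, f ⁅x, y⁆ = 0) : f = 0 := by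
  have h1 : f.comp (LinearMap.inl K L₁ L₂) = 0 := by
    apply perfect_vanish hL₁
    intro a b
    have hab : ((⁅a, b⁆ : L₁), (0 : L₂)) = ⁅((a, 0) : L₁ × L₂), ((b, 0) : L₁ × L₂)⁆ :=
      Prod.ext rfl (lie_zero 0).symm
    have h := hf (a, 0) (b, 0)
    rw [← hab] at h
    simpa using h
  have h2 : f.comp (LinearMap.inr K L₁ L₂) = 0 := by
    apply perfect_vanish hL₂
    intro a b
    have hab : ((0 : L₁), (⁅a, b⁆ : L₂)) = ⁅((0, a) : L₁ × L₂), ((0, b) : L₁ × L₂)⁆ :=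
      Prod.ext (lie_zero 0).symm rfl
    have h := hf (0, a) (0, b)
    rw [← hab] at h
    simpa using h
  ext p
  · simpa using LinearMap.ext_iff.mp h1 p
  · simpa using LinearMap.ext_iff.mp h2 p

end AuxProd

/-- for perfect Lie algebras `L₁`, `L₂`, irreducible modules `V₁`, `V₂`, and
`δ ≠ 1`: if both modules are nontrivial, or both are trivial one-dimensional, then
`Der_δ(L₁ ⊕ L₂, V₁ ⊗ V₂) = 0`. -/
theorem deltaDerSumTensor_eq_bot
    (K : Type*) [Field K] (L₁ L₂ : Type*) [LieRing L₁] [LieAlgebra K L₁]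
    [LieRing L₂] [LieAlgebra K L₂]
    (hL₁ : ⁅(⊤ : LieIdeal K L₁), (⊤ : LieIdeal K L₁)⁆ = ⊤)
    (hL₂ : ⁅(⊤ : LieIdeal K L₂), (⊤ : LieIdeal K L₂)⁆ = ⊤)
    (V₁ V₂ : Type*) [AddCommGroup V₁] [Module K V₁] [LieRingModule L₁ V₁] [LieModule K L₁ V₁]
    [AddCommGroup V₂] [Module K V₂] [LieRingModule L₂ V₂] [LieModule K L₂ V₂]
    [LieModule.IsIrreducible K L₁ V₁] [LieModule.IsIrreducible K L₂ V₂]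
    (δ : K) (hδ : δ ≠ 1)
    (hV : (¬ LieModule.IsTrivial L₁ V₁ ∧ ¬ LieModule.IsTrivial L₂ V₂) ∨
      (LieModule.IsTrivial L₁ V₁ ∧ LieModule.IsTrivial L₂ V₂ ∧
        Module.finrank K V₁ = 1 ∧ Module.finrank K V₂ = 1)) :
    deltaDerSumTensor K L₁ L₂ V₁ V₂ δ = ⊥ := by
  rw [eq_bot_iff]
  intro D hDmem
  simp only [Submodule.mem_bot]
  have hD : ∀ x y : L₁ × L₂, D ⁅x, y⁆ =
      δ • sumActT K L₁ L₂ V₁ V₂ x (D y) - δ • sumActT K L₁ L₂ V₁ V₂ y (D x) := hDmem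
  rcases hV with ⟨h1, h2⟩ | ⟨t1, t2, -, -⟩
  · -- both nontrivial
    by_cases hδ0 : δ = 0
    · subst hδ0
      apply prod_perfect_vanish hL₁ hL₂
      intro x y
      rw [hD]
      simp
    · have star := star_identity K L₁ L₂ V₁ V₂ δ hδ0 hδ D hD
      have hm1 := irreducible_nontrivial_ker (K := K) h1
      have hm2 := irreducible_nontrivial_ker (K := K) h2
      have hr : ∀ z₂ : L₂, D (0, z₂) = 0 := by
        intro z₂
        have hbr : ∀ a b : L₁,
            LinearMap.rTensor V₂ (LieModule.toEnd K L₁ V₁ ⁅a, b⁆) (D (0, z₂)) = 0 := by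
          intro a b
          have h := star (a, 0) (b, 0) (0, z₂)
          have e1 : ⁅((a, 0) : L₁ × L₂), ((b, 0) : L₁ × L₂)⁆ = (⁅a, b⁆, 0) :=
            Prod.ext rfl (lie_zero 0)
          have e2 : ⁅((a, 0) : L₁ × L₂), ((0, z₂) : L₁ × L₂)⁆ = 0 :=
            Prod.ext (lie_zero a) (zero_lie z₂)
          have e3 : ⁅((b, 0) : L₁ × L₂), ((0, z₂) : L₁ × L₂)⁆ = 0 :=
            Prod.ext (lie_zero b) (zero_lie z₂)
          rw [e1, e2, e3, sumActT_zero, sumActT_zero, sumActT_inl] at h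
          simpa using h
        have hall : ∀ c : L₁,
            LinearMap.rTensor V₂ (LieModule.toEnd K L₁ V₁ c) (D (0, z₂)) = 0 := by
          let g : L₁ →ₗ[K] V₁ ⊗[K] V₂ :=
            { toFun := fun c => LinearMap.rTensor V₂ (LieModule.toEnd K L₁ V₁ c) (D (0, z₂))
              map_add' := by intro c c'; simp [map_add, LinearMap.rTensor_add]
              map_smul' := by intro t c; simp [map_smul, LinearMap.rTensor_smul] }
          exact fun c => LinearMap.ext_iff.mp (perfect_vanish hL₁ g hbr) c
        exact tensor_ker_aux (fun c => LieModule.toEnd K L₁ V₁ c)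
          (fun v hv => hm1 v (by simpa using hv)) _ hall
      have hl : ∀ z₁ : L₁, D (z₁, 0) = 0 := by
        intro z₁
        have hbr : ∀ a b : L₂,
            LinearMap.lTensor V₁ (LieModule.toEnd K L₂ V₂ ⁅a, b⁆) (D (z₁, 0)) = 0 := by
          intro a b
          have h := star (0, a) (0, b) (z₁, 0)
          have e1 : ⁅((0, a) : L₁ × L₂), ((0, b) : L₁ × L₂)⁆ = (0, ⁅a, b⁆) :=
            Prod.ext (lie_zero 0) rfl
          have e2 : ⁅((0, a) : L₁ × L₂), ((z₁, 0) : L₁ × L₂)⁆ = 0 :=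
            Prod.ext (zero_lie z₁) (lie_zero a)
          have e3 : ⁅((0, b) : L₁ × L₂), ((z₁, 0) : L₁ × L₂)⁆ = 0 :=
            Prod.ext (zero_lie z₁) (lie_zero b)
          rw [e1, e2, e3, sumActT_zero, sumActT_zero, sumActT_inr] at h
          simpa using h
        have hall : ∀ c : L₂,
            LinearMap.lTensor V₁ (LieModule.toEnd K L₂ V₂ c) (D (z₁, 0)) = 0 := by
          let g : L₂ →ₗ[K] V₁ ⊗[K] V₂ :=
            { toFun := fun c => LinearMap.lTensor V₁ (LieModule.toEnd K L₂ V₂ c) (D (z₁, 0))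
              map_add' := by intro c c'; simp [map_add, LinearMap.lTensor_add]
              map_smul' := by intro t c; simp [map_smul, LinearMap.lTensor_smul] }
          exact fun c => LinearMap.ext_iff.mp (perfect_vanish hL₂ g hbr) c
        exact tensor_ker_aux' (fun c => LieModule.toEnd K L₂ V₂ c)
          (fun v hv => hm2 v (by simpa using hv)) _ hall
      apply LinearMap.ext
      intro p
      have hp : p = ((p.1, 0) : L₁ × L₂) + (0, p.2) := by
        ext <;> simp
      rw [hp, map_add, hl p.1, hr p.2, add_zero, LinearMap.zero_apply]
  · -- both trivial
    apply prod_perfect_vanish hL₁ hL₂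
    intro x y
    rw [hD]
    have hA : ∀ (z : L₁ × L₂) (w : V₁ ⊗[K] V₂), sumActT K L₁ L₂ V₁ V₂ z w = 0 := by
      intro z w
      have e1 : LieModule.toEnd K L₁ V₁ z.1 = 0 := LinearMap.ext fun v => t1.trivial z.1 v
      have e2 : LieModule.toEnd K L₂ V₂ z.2 = 0 := LinearMap.ext fun v => t2.trivial z.2 v
      unfold sumActT
      simp [e1, e2]
    simp [hA]
end

section
/- Let L₁ and L₂ be perfect Lie algebras over a field K, let V₁ be a nontrivial irreducible L₁-module, let V₂ = K be the trivial one-dimensional L₂-module, regard V₁ ⊗ V₂ as a module over the direct sum Lie algebra L₁ ⊕ L₂, and let δ ∈ K with δ ≠ 1. Then there is a K-linear isomorphism Der_δ(L₁ ⊕ L₂, V₁ ⊗ V₂) ≅ Der_δ(L₁, V₁). -/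
open scoped TensorProduct

/-- for perfect Lie algebras `L₁`, `L₂`, a nontrivial irreducible `L₁`-module
`V₁`, a trivial one-dimensional `L₂`-module `V₂`, and `δ ≠ 1`, there is a linear isomorphism
`Der_δ(L₁ ⊕ L₂, V₁ ⊗ V₂) ≅ Der_δ(L₁, V₁)`. -/
theorem deltaDerSumTensor_equiv_deltaDer
    (K : Type*) [Field K] (L₁ L₂ : Type*) [LieRing L₁] [LieAlgebra K L₁]
    [LieRing L₂] [LieAlgebra K L₂]
    (hL₁ : ⁅(⊤ : LieIdeal K L₁), (⊤ : LieIdeal K L₁)⁆ = ⊤)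
    (hL₂ : ⁅(⊤ : LieIdeal K L₂), (⊤ : LieIdeal K L₂)⁆ = ⊤)
    (V₁ V₂ : Type*) [AddCommGroup V₁] [Module K V₁] [LieRingModule L₁ V₁] [LieModule K L₁ V₁]
    [AddCommGroup V₂] [Module K V₂] [LieRingModule L₂ V₂] [LieModule K L₂ V₂]
    [LieModule.IsIrreducible K L₁ V₁] (hV₁ : ¬ LieModule.IsTrivial L₁ V₁)
    [LieModule.IsTrivial L₂ V₂] (hV₂ : Module.finrank K V₂ = 1)
    (δ : K) (hδ : δ ≠ 1) :
    Nonempty (↥(deltaDerSumTensor K L₁ L₂ V₁ V₂ δ) ≃ₗ[K] ↥(deltaDer K L₁ V₁ δ)) := by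
  classical
  have hfd : FiniteDimensional K V₂ := Module.finite_of_finrank_pos (by rw [hV₂]; norm_num)
  let ψ : V₂ ≃ₗ[K] K := LinearEquiv.ofFinrankEq _ _ (by simp [hV₂])
  let e : V₁ ⊗[K] V₂ ≃ₗ[K] V₁ := (LinearEquiv.lTensor V₁ ψ).trans (TensorProduct.rid K V₁)
  -- the second component acts trivially
  have hT2 : ∀ c : L₂, LieModule.toEnd K L₂ V₂ c = 0 := by
    intro c; ext v; simp [LieModule.toEnd_apply_apply, trivial_lie_zero]
  have hsum : ∀ x : L₁ × L₂,
      sumActT K L₁ L₂ V₁ V₂ x = LinearMap.rTensor V₂ (LieModule.toEnd K L₁ V₁ x.1) := by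
    intro x
    simp [sumActT, hT2]
  -- equivariance of e
  have key : ∀ (x : L₁ × L₂) (t : V₁ ⊗[K] V₂),
      e (sumActT K L₁ L₂ V₁ V₂ x t) = ⁅x.1, e t⁆ := by
    intro x t
    rw [hsum]
    induction t using TensorProduct.induction_on with
    | zero => simp
    | tmul v w =>
        simp [e, LinearMap.rTensor_tmul, LieModule.toEnd_apply_apply,
          TensorProduct.rid_tmul, lie_smul]
    | add a b ha hb => simp [map_add, lie_add, ha, hb]
  have key' : ∀ (x : L₁ × L₂) (w : V₁),
      sumActT K L₁ L₂ V₁ V₂ x (e.symm w) = e.symm ⁅x.1, w⁆ := by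
    intro x w
    apply e.injective
    rw [key]; simp
  -- vanishing on {0} × L₂
  have hvan : ∀ D ∈ deltaDerSumTensor K L₁ L₂ V₁ V₂ δ, ∀ y : L₂, D (0, y) = 0 := by
    intro D hD y
    have hbr0 : ∀ a b : L₂, D (0, ⁅a, b⁆) = 0 := by
      intro a b
      have h1 : ((0 : L₁), ⁅a, b⁆) = ⁅((0 : L₁), a), ((0 : L₁), b)⁆ := by
        show _ = (⁅(0 : L₁), (0 : L₁)⁆, ⁅a, b⁆); simp
      have h2 : ∀ c : L₂, sumActT K L₁ L₂ V₁ V₂ ((0 : L₁), c) = 0 := by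
        intro c; rw [hsum]; simp
      rw [h1, hD ((0 : L₁), a) ((0 : L₁), b), h2, h2]
      simp
    have hy0 : y ∈ (⁅(⊤ : LieIdeal K L₂), (⊤ : LieIdeal K L₂)⁆ : LieIdeal K L₂) := by
      rw [hL₂]; trivial
    have hy : y ∈ Submodule.span K
        { m | ∃ (x : (⊤ : LieIdeal K L₂)) (n : (⊤ : LieIdeal K L₂)), ⁅(x : L₂), (n : L₂)⁆ = m } := by
      rw [← LieSubmodule.lieIdeal_oper_eq_linear_span]
      exact hy0
    have hg : ∀ z : L₂, z ∈ Submodule.span K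
        { m | ∃ (x : (⊤ : LieIdeal K L₂)) (n : (⊤ : LieIdeal K L₂)), ⁅(x : L₂), (n : L₂)⁆ = m } →
        D (0, z) = 0 := by
      intro z hz
      induction hz using Submodule.span_induction with
      | mem m hm => obtain ⟨a, b, rfl⟩ := hm; exact hbr0 a b
      | zero => exact D.map_zero
      | add u v _ _ hu hv =>
          have : ((0 : L₁), u + v) = ((0 : L₁), u) + ((0 : L₁), v) := by simp
          rw [this, D.map_add, hu, hv, add_zero]
      | smul c u _ hu =>
          have : ((0 : L₁), c • u) = c • ((0 : L₁), u) := by simp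
          rw [this, D.map_smul, hu, smul_zero]
    exact hg y hy
  -- the forward and backward membership proofs
  have memF : ∀ D ∈ deltaDerSumTensor K L₁ L₂ V₁ V₂ δ,
      (e.toLinearMap ∘ₗ D ∘ₗ LinearMap.inl K L₁ L₂) ∈ deltaDer K L₁ V₁ δ := by
    intro D hD x y
    have h1 : ((⁅x, y⁆, (0 : L₂)) : L₁ × L₂) = ⁅(x, (0 : L₂)), (y, (0 : L₂))⁆ := by
      show _ = (⁅x, y⁆, ⁅(0 : L₂), (0 : L₂)⁆); simp
    simp only [LinearMap.comp_apply, LinearMap.inl_apply, LinearEquiv.coe_coe]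
    rw [h1, hD (x, 0) (y, 0), map_sub, map_smul, map_smul,
      key (x, (0 : L₂)), key (y, (0 : L₂))]
  have memG : ∀ D ∈ deltaDer K L₁ V₁ δ,
      (e.symm.toLinearMap ∘ₗ D ∘ₗ LinearMap.fst K L₁ L₂) ∈
        deltaDerSumTensor K L₁ L₂ V₁ V₂ δ := by
    intro D hD x y
    have h1 : (⁅x, y⁆ : L₁ × L₂).1 = ⁅x.1, y.1⁆ := rfl
    simp only [LinearMap.comp_apply, LinearMap.fst_apply, LinearEquiv.coe_coe, h1]
    rw [hD x.1 y.1, key', key', map_sub, map_smul, map_smul]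
  refine ⟨{ toFun := fun D => ⟨e.toLinearMap ∘ₗ D.1 ∘ₗ LinearMap.inl K L₁ L₂, memF D.1 D.2⟩,
            invFun := fun D => ⟨e.symm.toLinearMap ∘ₗ D.1 ∘ₗ LinearMap.fst K L₁ L₂,
              memG D.1 D.2⟩,
            map_add' := ?_, map_smul' := ?_, left_inv := ?_, right_inv := ?_ }⟩
  · intro a b; ext z; simp
  · intro c a; ext z; simp
  · intro D
    apply Subtype.ext
    apply LinearMap.ext; intro z
    simp only [LinearMap.comp_apply, LinearMap.fst_apply, LinearMap.inl_apply,
      LinearEquiv.coe_coe, LinearEquiv.symm_apply_apply]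
    have hz : z = (z.1, (0 : L₂)) + ((0 : L₁), z.2) := by simp
    conv_rhs => rw [hz]
    rw [D.1.map_add, hvan D.1 D.2 z.2, add_zero]
  · intro D
    apply Subtype.ext
    apply LinearMap.ext; intro z
    simp
end

section
/- Let G be an abelian group, K a field, L a finite-dimensional Lie algebra over K with a G-grading, i.e. a family of subspaces (L_α)_{α∈G} such that L is the internal direct sum of the L_α and [L_α, L_β] ⊆ L_{α+β} for all α, β ∈ G, and let V be a finite-dimensional L-module with a compatible G-grading, i.e. a family of subspaces (V_α)_{α∈G} such that V is the internal direct sum of the V_α and L_α • V_β ⊆ V_{α+β} for all α, β ∈ G. For δ ∈ K and α ∈ G, let Der_δ^α(L,V) = {D ∈ Der_δ(L,V) : D(L_β) ⊆ V_{β−α} for all β ∈ G}. Then Der_δ(L,V) is the internal direct sum of the subspaces Der_δ^α(L,V), α ∈ G. -/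
/-- Given gradings `(Lgr α)` of `L` and `(Vgr α)` of `V` by an abelian group `G`, the space of
linear maps `D : L → V` of weight `α`, i.e. with `D (Lgr β) ⊆ Vgr (β - α)` for all `β`. -/
def weightMaps {K : Type*} [Field K] {L : Type*} [LieRing L] [LieAlgebra K L]
    {V : Type*} [AddCommGroup V] [Module K V] {G : Type*} [AddCommGroup G]
    (Lgr : G → Submodule K L) (Vgr : G → Submodule K V) (α : G) :
    Submodule K (L →ₗ[K] V) where
  carrier := {D | ∀ β : G, ∀ x ∈ Lgr β, D x ∈ Vgr (β - α)}
  zero_mem' := by intro β x _; simp only [LinearMap.zero_apply]; exact (Vgr (β - α)).zero_mem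
  add_mem' := by
    intro a b ha hb β x hx
    exact (Vgr (β - α)).add_mem (ha β x hx) (hb β x hx)
  smul_mem' := by
    intro c a ha β x hx
    exact (Vgr (β - α)).smul_mem c (ha β x hx)

section aux

set_option linter.unusedSectionVars false

variable {K : Type*} [Field K] {G : Type*} [AddCommGroup G] [DecidableEq G]
  {M : Type*} [AddCommGroup M] [Module K M]

/-- The projection of `M` onto the graded piece `Mgr γ`, as an endomorphism of `M`. -/
noncomputable def gradProj (Mgr : G → Submodule K M) [DirectSum.Decomposition Mgr] (γ : G) :
    M →ₗ[K] M :=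
  (Mgr γ).subtype ∘ₗ (DirectSum.component K G (fun i => Mgr i) γ) ∘ₗ
    (DirectSum.decomposeLinearEquiv Mgr).toLinearMap

lemma gradProj_apply (Mgr : G → Submodule K M) [DirectSum.Decomposition Mgr] (γ : G) (v : M) :
    gradProj Mgr γ v = (DirectSum.decompose Mgr v γ : M) := rfl

lemma gradProj_mem (Mgr : G → Submodule K M) [DirectSum.Decomposition Mgr] (γ : G) (v : M) :
    gradProj Mgr γ v ∈ Mgr γ := (DirectSum.decompose Mgr v γ).2

lemma gradProj_of_mem_same (Mgr : G → Submodule K M) [DirectSum.Decomposition Mgr] {γ : G}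
    {v : M} (hv : v ∈ Mgr γ) : gradProj Mgr γ v = v :=
  DirectSum.decompose_of_mem_same Mgr hv

lemma gradProj_of_mem_ne (Mgr : G → Submodule K M) [DirectSum.Decomposition Mgr] {γ γ' : G}
    {v : M} (hv : v ∈ Mgr γ) (h : γ ≠ γ') : gradProj Mgr γ' v = 0 :=
  DirectSum.decompose_of_mem_ne Mgr hv h

lemma gradProj_of_not_mem (Mgr : G → Submodule K M) [DirectSum.Decomposition Mgr] {γ : G}
    (h : Mgr γ = ⊥) (v : M) : gradProj Mgr γ v = 0 :=
  Submodule.eq_bot_iff (Mgr γ) |>.mp h _ (gradProj_mem Mgr γ v)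

open Classical in
lemma gradProj_sum (Mgr : G → Submodule K M) [DirectSum.Decomposition Mgr]
    (S : Finset G) (hS : ∀ β ∉ S, Mgr β = ⊥) (v : M) :
    ∑ γ ∈ S, gradProj Mgr γ v = v := by
  classical
  have h := DirectSum.sum_support_decompose Mgr v
  have hsub : (DirectSum.decompose Mgr v).support ⊆ S := by
    intro γ hγ
    by_contra hγS
    have hb : (DirectSum.decompose Mgr v γ : M) = 0 :=
      Submodule.eq_bot_iff (Mgr γ) |>.mp (hS γ hγS) _ (DirectSum.decompose Mgr v γ).2
    simp only [DFinsupp.mem_support_iff] at hγ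
    exact hγ (Subtype.ext hb)
  calc ∑ γ ∈ S, gradProj Mgr γ v
      = ∑ γ ∈ (DirectSum.decompose Mgr v).support, gradProj Mgr γ v := by
        refine (Finset.sum_subset hsub ?_).symm
        intro γ _ hγ
        rw [DFinsupp.notMem_support_iff] at hγ
        rw [gradProj_apply, hγ, Submodule.coe_zero]
    _ = ∑ γ ∈ (DirectSum.decompose Mgr v).support, ((DirectSum.decompose Mgr v γ : M)) :=
        Finset.sum_congr rfl fun γ _ => gradProj_apply Mgr γ v
    _ = v := h

/-- The weight-`α` component operator on `L →ₗ[K] V`. -/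
noncomputable def weightCompMap {L V : Type*} [AddCommGroup L] [Module K L]
    [AddCommGroup V] [Module K V] (Lgr : G → Submodule K L) (Vgr : G → Submodule K V)
    [DirectSum.Decomposition Lgr] [DirectSum.Decomposition Vgr]
    (S : Finset G) (α : G) : (L →ₗ[K] V) →ₗ[K] (L →ₗ[K] V) :=
  ∑ β ∈ S, (LinearMap.llcomp K L V V (gradProj Vgr (β - α))).comp
    (LinearMap.lcomp K V (gradProj Lgr β))

lemma weightCompMap_apply {L V : Type*} [AddCommGroup L] [Module K L]
    [AddCommGroup V] [Module K V] (Lgr : G → Submodule K L) (Vgr : G → Submodule K V)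
    [DirectSum.Decomposition Lgr] [DirectSum.Decomposition Vgr]
    (S : Finset G) (α : G) (D : L →ₗ[K] V) (x : L) :
    weightCompMap Lgr Vgr S α D x = ∑ β ∈ S, gradProj Vgr (β - α) (D (gradProj Lgr β x)) := by
  simp [weightCompMap, LinearMap.sum_apply]

end aux

/-- for a `G`-graded Lie algebra `L` and a compatibly `G`-graded `L`-module `V`,
the space `Der_δ(L,V)` is the internal direct sum of the subspaces `Der_δ^α(L,V)` of
`δ`-derivations of weight `α`, `α ∈ G`. -/
theorem deltaDer_internal_direct_sum_of_weights
    (K : Type*) [Field K] (G : Type*) [AddCommGroup G] [DecidableEq G]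
    (L : Type*) [LieRing L] [LieAlgebra K L] [FiniteDimensional K L]
    (V : Type*) [AddCommGroup V] [Module K V] [LieRingModule L V] [LieModule K L V]
    [FiniteDimensional K V]
    (Lgr : G → Submodule K L) (hL : DirectSum.IsInternal Lgr)
    (hLb : ∀ α β : G, ∀ x ∈ Lgr α, ∀ y ∈ Lgr β, ⁅x, y⁆ ∈ Lgr (α + β))
    (Vgr : G → Submodule K V) (hV : DirectSum.IsInternal Vgr)
    (hVb : ∀ α β : G, ∀ x ∈ Lgr α, ∀ v ∈ Vgr β, ⁅x, v⁆ ∈ Vgr (α + β))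
    (δ : K) :
    iSupIndep (fun α : G => deltaDer K L V δ ⊓ weightMaps Lgr Vgr α) ∧
      (⨆ α : G, deltaDer K L V δ ⊓ weightMaps Lgr Vgr α) = deltaDer K L V δ := by
  classical
  letI : DirectSum.Decomposition Lgr := hL.chooseDecomposition
  letI : DirectSum.Decomposition Vgr := hV.chooseDecomposition
  obtain ⟨S, hSspec⟩ : ∃ S : Finset G, ∀ β ∉ S, Lgr β = ⊥ := by
    refine ⟨(Submodule.finite_ne_bot_of_iSupIndep hL.submodule_iSupIndep).toFinset, ?_⟩
    intro β hβ
    by_contra hne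
    exact hβ ((Submodule.finite_ne_bot_of_iSupIndep hL.submodule_iSupIndep).mem_toFinset.mpr hne)
  obtain ⟨T, hTspec⟩ : ∃ T : Finset G, ∀ γ ∉ T, Vgr γ = ⊥ := by
    refine ⟨(Submodule.finite_ne_bot_of_iSupIndep hV.submodule_iSupIndep).toFinset, ?_⟩
    intro γ hγ
    by_contra hne
    exact hγ ((Submodule.finite_ne_bot_of_iSupIndep hV.submodule_iSupIndep).mem_toFinset.mpr hne)
  set Φ := weightCompMap (K := K) Lgr Vgr S with hΦdef
  -- extensionality along the grading of L
  have hext : ∀ f g : L →ₗ[K] V, (∀ β : G, ∀ x ∈ Lgr β, f x = g x) → f = g := by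
    intro f g h
    ext x
    conv_lhs => rw [← gradProj_sum Lgr S hSspec x]
    conv_rhs => rw [← gradProj_sum Lgr S hSspec x]
    rw [map_sum, map_sum]
    exact Finset.sum_congr rfl fun β _ => h β _ (gradProj_mem Lgr β x)
  -- value of Φ on homogeneous elements
  have hhom : ∀ (α : G) (D : L →ₗ[K] V) (β : G) (x : L), x ∈ Lgr β →
      Φ α D x = gradProj Vgr (β - α) (D x) := by
    intro α D β x hx
    rw [hΦdef, weightCompMap_apply]
    by_cases hβ : β ∈ S
    · rw [Finset.sum_eq_single_of_mem β hβ]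
      · rw [gradProj_of_mem_same Lgr hx]
      · intro b _ hb
        rw [gradProj_of_mem_ne Lgr hx (Ne.symm hb), map_zero, map_zero]
    · have hx0 : x = 0 := Submodule.eq_bot_iff _ |>.mp (hSspec β hβ) x hx
      subst hx0
      simp
  have hweight : ∀ (α : G) (D : L →ₗ[K] V), Φ α D ∈ weightMaps Lgr Vgr α := by
    intro α D β x hx
    rw [hhom α D β x hx]
    exact gradProj_mem Vgr _ _
  have hsame : ∀ (α : G) (D : L →ₗ[K] V), D ∈ weightMaps Lgr Vgr α → Φ α D = D := by
    intro α D hD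
    refine hext _ _ fun β x hx => ?_
    rw [hhom α D β x hx]
    exact gradProj_of_mem_same Vgr (hD β x hx)
  have hne : ∀ (α α' : G), α' ≠ α → ∀ D ∈ weightMaps Lgr Vgr α', Φ α D = 0 := by
    intro α α' hαα' D hD
    refine hext _ _ fun β x hx => ?_
    rw [hhom α D β x hx, LinearMap.zero_apply]
    exact gradProj_of_mem_ne Vgr (hD β x hx) fun h => hαα' (sub_right_inj.mp h)
  -- projections interact well with the bracket
  have hlieP : ∀ (β γ : G) (x : L) (v : V), x ∈ Lgr β →
      gradProj Vgr (β + γ) ⁅x, v⁆ = ⁅x, gradProj Vgr γ v⁆ := by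
    intro β γ x v hx
    have hlsum : ⁅x, v⁆ = ∑ γ' ∈ T, ⁅x, gradProj Vgr γ' v⁆ := by
      conv_lhs => rw [← gradProj_sum Vgr T hTspec v]
      exact map_sum (LieModule.toEnd K L V x) (fun γ' => gradProj Vgr γ' v) T
    rw [hlsum, map_sum]
    by_cases hγ : γ ∈ T
    · rw [Finset.sum_eq_single_of_mem γ hγ]
      · exact gradProj_of_mem_same Vgr (hVb β γ x hx _ (gradProj_mem Vgr γ v))
      · intro γ' _ hγ'
        exact gradProj_of_mem_ne Vgr (hVb β γ' x hx _ (gradProj_mem Vgr γ' v))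
          fun h => hγ' (add_left_cancel h)
    · rw [gradProj_of_not_mem Vgr (hTspec γ hγ) v, lie_zero]
      refine Finset.sum_eq_zero fun γ' hγ' => ?_
      exact gradProj_of_mem_ne Vgr (hVb β γ' x hx _ (gradProj_mem Vgr γ' v))
        fun h => hγ ((add_left_cancel h) ▸ hγ')
  -- Φ preserves δ-derivations
  have hder : ∀ (α : G) (D : L →ₗ[K] V), D ∈ deltaDer K L V δ → Φ α D ∈ deltaDer K L V δ := by
    intro α D hD
    have key : ∀ (β : G) (x : L), x ∈ Lgr β → ∀ (β' : G) (y : L), y ∈ Lgr β' →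
        Φ α D ⁅x, y⁆ = δ • ⁅x, Φ α D y⁆ - δ • ⁅y, Φ α D x⁆ := by
      intro β x hx β' y hy
      have hxy : ⁅x, y⁆ ∈ Lgr (β + β') := hLb β β' x hx y hy
      rw [hhom α D _ _ hxy, hD x y, map_sub, map_smul, map_smul,
          hhom α D β' y hy, hhom α D β x hx]
      congr 1
      · congr 1
        have e : β + β' - α = β + (β' - α) := by abel
        rw [e, hlieP β (β' - α) x (D y) hx]
      · congr 1
        have e : β + β' - α = β' + (β - α) := by abel
        rw [e, hlieP β' (β - α) y (D x) hy]
    have keyx : ∀ (β : G) (x : L), x ∈ Lgr β → ∀ y : L,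
        Φ α D ⁅x, y⁆ = δ • ⁅x, Φ α D y⁆ - δ • ⁅y, Φ α D x⁆ := by
      intro β x hx y
      have hy : y ∈ ⨆ β : G, Lgr β := by rw [hL.submodule_iSup_eq_top]; trivial
      refine Submodule.iSup_induction (p := Lgr)
        (motive := fun y => Φ α D ⁅x, y⁆ = δ • ⁅x, Φ α D y⁆ - δ • ⁅y, Φ α D x⁆) hy ?_ ?_ ?_
      · intro β' y hy'
        exact key β x hx β' y hy'
      · simp
      · intro y₁ y₂ h1 h2
        rw [lie_add, map_add, map_add, lie_add, add_lie, h1, h2, smul_add, smul_add]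
        abel
    intro x y
    have hx : x ∈ ⨆ β : G, Lgr β := by rw [hL.submodule_iSup_eq_top]; trivial
    refine Submodule.iSup_induction (p := Lgr)
      (motive := fun x => Φ α D ⁅x, y⁆ = δ • ⁅x, Φ α D y⁆ - δ • ⁅y, Φ α D x⁆) hx ?_ ?_ ?_
    · intro β x hx'
      exact keyx β x hx' y
    · simp
    · intro x₁ x₂ h1 h2
      rw [add_lie, map_add, map_add, add_lie, lie_add, h1, h2, smul_add, smul_add]
      abel
  -- decomposition of an arbitrary map into weight components
  have hdecomp : ∀ D : L →ₗ[K] V,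
      D = ∑ α ∈ Finset.image₂ (fun β γ => β - γ) S T, Φ α D := by
    intro D
    set A := Finset.image₂ (fun β γ : G => β - γ) S T with hA
    refine (hext (∑ α ∈ A, Φ α D) D fun β x hx => ?_).symm
    rw [LinearMap.sum_apply, Finset.sum_congr rfl fun α (_ : α ∈ A) => hhom α D β x hx]
    by_cases hβ : β ∈ S
    · have hinj : ∀ a ∈ A, ∀ b ∈ A, β - a = β - b → a = b := fun a _ b _ h => sub_right_inj.mp h
      calc ∑ α ∈ A, gradProj Vgr (β - α) (D x)
          = ∑ γ ∈ A.image (fun α => β - α), gradProj Vgr γ (D x) :=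
            (Finset.sum_image (f := fun γ => gradProj Vgr γ (D x)) hinj).symm
        _ = D x := by
            conv_rhs => rw [← gradProj_sum Vgr T hTspec (D x)]
            refine (Finset.sum_subset ?_ ?_).symm
            · intro γ hγ
              refine Finset.mem_image.mpr ⟨β - γ, Finset.mem_image₂.mpr ⟨β, hβ, γ, hγ, rfl⟩, ?_⟩
              exact sub_sub_cancel β γ
            · intro γ _ hγT
              exact gradProj_of_not_mem Vgr (hTspec γ hγT) (D x)
    · have hx0 : x = 0 := Submodule.eq_bot_iff _ |>.mp (hSspec β hβ) x hx
      subst hx0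
      simp
  constructor
  · rw [iSupIndep_def]
    intro α
    rw [Submodule.disjoint_def]
    intro D hD1 hD2
    obtain ⟨hDd, hDw⟩ := Submodule.mem_inf.mp hD1
    have hker : (⨆ β, ⨆ _ : β ≠ α, (deltaDer K L V δ ⊓ weightMaps Lgr Vgr β)) ≤
        LinearMap.ker (Φ α) := by
      refine iSup₂_le fun β hβ => ?_
      intro D' hD'
      rw [LinearMap.mem_ker]
      exact hne α β hβ D' (Submodule.mem_inf.mp hD').2
    have h0 := hker hD2
    rw [LinearMap.mem_ker] at h0
    rw [← hsame α D hDw, h0]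
  · refine le_antisymm (iSup_le fun α => inf_le_left) fun D hD => ?_
    rw [hdecomp D]
    exact Submodule.sum_mem _ fun α _ =>
      Submodule.mem_iSup_of_mem α (Submodule.mem_inf.mpr ⟨hder α D hD, hweight α D⟩)
end

section
/- Let K be an algebraically closed field of characteristic 0, n ≥ 1 an integer, and V an irreducible sl(2,K)-module of dimension n+1. Then the space Der_{−2/n}(sl(2,K), V) of (−2/n)-derivations of sl(2,K) with values in V has dimension n+3. -/
open LieAlgebra.SpecialLinear LieModule

namespace Sl2DD
variable (K : Type*) [Field K]

noncomputable abbrev LL := LieAlgebra.SpecialLinear.sl (Fin 2) K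

def Ee : LL K := LieAlgebra.SpecialLinear.single (0 : Fin 2) 1 (by decide) (1 : K)
def Ff : LL K := LieAlgebra.SpecialLinear.single (1 : Fin 2) 0 (by decide) (1 : K)
def Hh : LL K := ⟨!![1,0;0,-1], by
  show !![(1:K),0;0,-1] ∈ LinearMap.ker (Matrix.traceLinearMap (Fin 2) K K)
  rw [LinearMap.mem_ker]
  show Matrix.trace !![(1:K),0;0,-1] = 0
  simp [Matrix.trace_fin_two]⟩

lemma Ee_val : (Ee K).val = !![0,1;0,0] := by
  ext i j; fin_cases i <;> fin_cases j <;> simp [Ee, Matrix.single]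

lemma Ff_val : (Ff K).val = !![0,0;1,0] := by
  ext i j; fin_cases i <;> fin_cases j <;> simp [Ff, Matrix.single]

lemma Hh_val : (Hh K).val = !![1,0;0,-1] := rfl

lemma lie_Ee_Ff : ⁅Ee K, Ff K⁆ = Hh K := by
  apply Subtype.ext
  show (Ee K).val * (Ff K).val - (Ff K).val * (Ee K).val = _
  rw [Ee_val, Ff_val, Hh_val]
  ext i j; fin_cases i <;> fin_cases j <;> simp [Matrix.mul_apply, Fin.sum_univ_two] <;> norm_num

lemma lie_Hh_Ee : ⁅Hh K, Ee K⁆ = 2 • Ee K := by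
  apply Subtype.ext
  show (Hh K).val * (Ee K).val - (Ee K).val * (Hh K).val = (2:ℕ) • (Ee K).val
  rw [Ee_val, Hh_val]
  ext i j; fin_cases i <;> fin_cases j <;> simp [Matrix.mul_apply, Fin.sum_univ_two] <;> norm_num

lemma lie_Hh_Ff : ⁅Hh K, Ff K⁆ = -(2 • Ff K) := by
  apply Subtype.ext
  show (Hh K).val * (Ff K).val - (Ff K).val * (Hh K).val = -((2:ℕ) • (Ff K).val)
  rw [Ff_val, Hh_val]
  ext i j; fin_cases i <;> fin_cases j <;> simp [Matrix.mul_apply, Fin.sum_univ_two] <;> norm_num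

lemma Hh_ne_zero : Hh K ≠ 0 := by
  intro h
  have := congr_arg (fun x => x.val 0 0) h
  simp [Hh_val] at this


lemma triple : IsSl2Triple (Hh K) (Ee K) (Ff K) :=
  ⟨Hh_ne_zero K, lie_Ee_Ff K, lie_Hh_Ee K, lie_Hh_Ff K⟩

/-- every element of sl2 decomposes -/
lemma decomp (x : LL K) :
    x = x.val 0 1 • Ee K + x.val 1 0 • Ff K + x.val 0 0 • Hh K := by
  have htr : x.val 0 0 + x.val 1 1 = 0 := by
    have := x.property
    have : Matrix.trace x.val = 0 := this
    simpa [Matrix.trace_fin_two] using this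
  apply Subtype.ext
  show x.val = _
  have : ((x.val 0 1 • Ee K + x.val 1 0 • Ff K + x.val 0 0 • Hh K) : LL K).val
      = x.val 0 1 • (Ee K).val + x.val 1 0 • (Ff K).val + x.val 0 0 • (Hh K).val := rfl
  rw [this, Ee_val, Ff_val, Hh_val]
  ext i j; fin_cases i <;> fin_cases j <;> simp <;> linear_combination htr



lemma Ee01 : (Ee K).val 0 1 = 1 := by simp [Ee_val]
lemma Ee10 : (Ee K).val 1 0 = 0 := by simp [Ee_val]
lemma Ee00 : (Ee K).val 0 0 = 0 := by simp [Ee_val]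
lemma Ff01 : (Ff K).val 0 1 = 0 := by simp [Ff_val]
lemma Ff10 : (Ff K).val 1 0 = 1 := by simp [Ff_val]
lemma Ff00 : (Ff K).val 0 0 = 0 := by simp [Ff_val]
lemma Hh01 : (Hh K).val 0 1 = 0 := by simp [Hh_val]
lemma Hh10 : (Hh K).val 1 0 = 0 := by simp [Hh_val]
lemma Hh00 : (Hh K).val 0 0 = 1 := by simp [Hh_val]


variable [IsAlgClosed K] [CharZero K]
  (n : ℕ)
  (V : Type*) [AddCommGroup V] [Module K V]
  [LieRingModule (LL K) V] [LieModule K (LL K) V]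
  [LieModule.IsIrreducible K (LL K) V]

lemma exists_basis (hn : 1 ≤ n) (hdim : Module.finrank K V = n + 1) :
    ∃ (W : ℕ → V) (β : Module.Basis (Fin (n+1)) K V),
      (∀ j : Fin (n+1), β j = W j) ∧ W (n+1) = 0 ∧
      (∀ j : ℕ, ⁅Hh K, W j⁆ = (((n:K) - 2*j)) • W j) ∧
      (∀ j : ℕ, ⁅Ff K, W j⁆ = W (j+1)) ∧
      (⁅Ee K, W 0⁆ = 0) ∧
      (∀ j : ℕ, ⁅Ee K, W (j+1)⁆ = ((((j:K))+1) * ((n:K)-j)) • W j) := by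
  classical
  haveI : FiniteDimensional K V := FiniteDimensional.of_finrank_pos (by rw [hdim]; omega)
  haveI : Nontrivial V := Module.nontrivial_of_finrank_pos (R := K) (by rw [hdim]; omega)
  obtain ⟨μ, hμ⟩ := Module.End.exists_eigenvalue (toEnd K (LL K) V (Hh K))
  obtain ⟨m, hm⟩ := hμ.exists_hasEigenvector
  -- the chain of e-raisings
  set g : ℕ → V := fun k => ((toEnd K (LL K) V (Ee K)) ^ k) m with hg
  have hgsucc : ∀ k, g (k+1) = ⁅Ee K, g k⁆ := by
    intro k
    simp [hg, pow_succ', Module.End.mul_apply, toEnd_apply_apply]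
  have hgh : ∀ k, ⁅Hh K, g k⁆ = (μ + 2*k) • g k := by
    intro k
    induction k with
    | zero =>
      simpa [hg] using (Module.End.mem_eigenspace_iff.mp hm.1)
    | succ k ih =>
      rw [hgsucc, leibniz_lie, (triple K).lie_h_e_smul K, ih, lie_smul, smul_lie, ← hgsucc]
      rw [← add_smul]
      push_cast
      ring_nf
  have hexzero : ∃ k, g k = 0 := by
    by_contra hcon
    push_neg at hcon
    have hinj : Function.Injective (fun k : ℕ => μ + 2*(k:K)) := by
      intro i j hij
      simp only [add_right_inj] at hij
      have : (i : K) = j := by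
        field_simp at hij
        exact_mod_cast hij
      exact_mod_cast this
    have hli := Module.End.eigenvectors_linearIndependent'
      (toEnd K (LL K) V (Hh K)) (fun k : ℕ => μ + 2*(k:K)) hinj g
      (fun k => ⟨Module.End.mem_eigenspace_iff.mpr (by simpa [toEnd_apply_apply] using hgh k),
        hcon k⟩)
    exact Module.Finite.not_linearIndependent_of_infinite g hli
  obtain ⟨k, hk0, hk1⟩ := Nat.exists_not_and_succ_of_not_zero_of_exists
    (p := fun k => g k = 0) (by simpa [hg] using hm.2) hexzero
  have P : (triple K).HasPrimitiveVectorWith (g k) (μ + 2*k) :=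
    ⟨hk0, hgh k, by rw [← hgsucc]; exact hk1⟩
  obtain ⟨ν, hν⟩ := P.exists_nat
  -- the chain of f-lowerings
  set W : ℕ → V := fun j => ((toEnd K (LL K) V (Ff K)) ^ j) (g k) with hW
  have hWsucc : ∀ j, ⁅Ff K, W j⁆ = W (j+1) := fun j => P.lie_f_pow_toEnd_f j
  have hWh : ∀ j : ℕ, ⁅Hh K, W j⁆ = (((ν:K) - 2*j)) • W j := by
    intro j; rw [P.lie_h_pow_toEnd_f j, ← hν]
  have hWe : ∀ j : ℕ, ⁅Ee K, W (j+1)⁆ = ((((j:K))+1) * ((ν:K)-j)) • W j := by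
    intro j; rw [P.lie_e_pow_succ_toEnd_f j, hν]
  have hWe0 : ⁅Ee K, W 0⁆ = 0 := by simpa [hW] using P.lie_e
  have hWne : ∀ j ≤ ν, W j ≠ 0 := fun j hj => P.pow_toEnd_f_ne_zero_of_eq_nat hν hj
  have hWtop : W (ν+1) = 0 := P.pow_toEnd_f_eq_zero_of_eq_nat hν
  -- linear independence
  have hinj2 : Function.Injective (fun j : Fin (ν+1) => (ν:K) - 2*(j:ℕ)) := by
    intro i j hij
    simp only [sub_right_inj] at hij
    have : ((i:ℕ) : K) = ((j:ℕ) : K) := by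
      field_simp at hij
      exact_mod_cast hij
    exact Fin.ext (by exact_mod_cast this)
  have hli : LinearIndependent K (fun j : Fin (ν+1) => W j) :=
    Module.End.eigenvectors_linearIndependent' (toEnd K (LL K) V (Hh K)) _ hinj2 _
      (fun j => ⟨Module.End.mem_eigenspace_iff.mpr
        (by simpa [toEnd_apply_apply] using hWh j), hWne j (by omega)⟩)
  -- the span is a Lie submodule
  have hWzero : ∀ j, ν + 1 ≤ j → W j = 0 := by
    intro j hj
    induction j with
    | zero => omega
    | succ j ih =>
      rcases Nat.lt_or_ge j (ν+1) with h | h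
      · have : j = ν := by omega
        rw [this]; exact hWtop
      · rw [← hWsucc, ih (by omega), lie_zero]
  set S : Submodule K V := Submodule.span K (Set.range fun j : Fin (ν+1) => W j) with hS
  have hWmem : ∀ j : ℕ, W j ∈ S := by
    intro j
    rcases Nat.lt_or_ge j (ν+1) with h | h
    · exact Submodule.subset_span ⟨⟨j, h⟩, rfl⟩
    · rw [hWzero j h]; exact S.zero_mem
  have keyE : ∀ x ∈ S, ⁅Ee K, x⁆ ∈ S := by
    intro x hx
    induction hx using Submodule.span_induction with
    | mem x hx =>
      obtain ⟨⟨j, hj⟩, rfl⟩ := hx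
      match j with
      | 0 => rw [hWe0]; exact S.zero_mem
      | (j+1) => rw [hWe j]; exact S.smul_mem _ (hWmem j)
    | zero => rw [lie_zero]; exact S.zero_mem
    | add x y _ _ hx hy => rw [lie_add]; exact S.add_mem hx hy
    | smul c x _ hx => rw [lie_smul]; exact S.smul_mem c hx
  have keyF : ∀ x ∈ S, ⁅Ff K, x⁆ ∈ S := by
    intro x hx
    induction hx using Submodule.span_induction with
    | mem x hx =>
      obtain ⟨⟨j, hj⟩, rfl⟩ := hx
      rw [hWsucc]; exact hWmem (j+1)
    | zero => rw [lie_zero]; exact S.zero_mem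
    | add x y _ _ hx hy => rw [lie_add]; exact S.add_mem hx hy
    | smul c x _ hx => rw [lie_smul]; exact S.smul_mem c hx
  have keyH : ∀ x ∈ S, ⁅Hh K, x⁆ ∈ S := by
    intro x hx
    induction hx using Submodule.span_induction with
    | mem x hx =>
      obtain ⟨⟨j, hj⟩, rfl⟩ := hx
      rw [hWh]; exact S.smul_mem _ (hWmem j)
    | zero => rw [lie_zero]; exact S.zero_mem
    | add x y _ _ hx hy => rw [lie_add]; exact S.add_mem hx hy
    | smul c x _ hx => rw [lie_smul]; exact S.smul_mem c hx
  set SL : LieSubmodule K (LL K) V :=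
    { S with
      lie_mem := by
        intro x m hm
        have : ⁅x, m⁆ = x.val 0 1 • ⁅Ee K, m⁆ + x.val 1 0 • ⁅Ff K, m⁆
            + x.val 0 0 • ⁅Hh K, m⁆ := by
          conv_lhs => rw [decomp K x]
          simp [add_lie, smul_lie]
        rw [this]
        exact S.add_mem (S.add_mem (S.smul_mem _ (keyE m hm)) (S.smul_mem _ (keyF m hm)))
          (S.smul_mem _ (keyH m hm)) } with hSL
  have hSLne : SL ≠ ⊥ := by
    intro hbot
    have : W 0 ∈ SL := hWmem 0
    rw [hbot] at this
    exact hWne 0 (by omega) (by simpa using this)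
  have hSLtop : SL = ⊤ := (IsSimpleOrder.eq_bot_or_eq_top SL).resolve_left hSLne
  have hStop : S = ⊤ := by
    have := congr_arg (fun (X : LieSubmodule K (LL K) V) => (X : Submodule K V)) hSLtop
    simpa [hSL] using this
  let β0 : Module.Basis (Fin (ν+1)) K V := Module.Basis.mk hli (by rw [← hS, hStop])
  have hcard : ν = n := by
    have := Module.finrank_eq_card_basis β0
    rw [hdim] at this
    simpa using this.symm
  subst hcard
  exact ⟨W, β0, fun j => Module.Basis.mk_apply hli _ j, hWtop, hWh, hWsucc, hWe0, hWe⟩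


end Sl2DD

namespace Sl2DD

section Coord
variable {K : Type*} [Field K] {n : ℕ} {V : Type*} [AddCommGroup V] [Module K V]
  [LieRingModule (LL K) V] [LieModule K (LL K) V]

/-- coordinate functionals, extended by zero -/
noncomputable def cc (β : Module.Basis (Fin (n+1)) K V) (j : ℕ) : V →ₗ[K] K :=
  if h : j ≤ n then β.coord ⟨j, by omega⟩ else 0

variable (β : Module.Basis (Fin (n+1)) K V) (W : ℕ → V)

/-- bundle of hypotheses describing a highest-weight basis -/
structure Good : Prop where
  hβ : ∀ j : Fin (n+1), β j = W j
  hWtop : W (n+1) = 0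
  hH : ∀ j : ℕ, ⁅Hh K, W j⁆ = ((n:K) - 2*j) • W j
  hF : ∀ j : ℕ, ⁅Ff K, W j⁆ = W (j+1)
  hE0 : ⁅Ee K, W 0⁆ = 0
  hE : ∀ j : ℕ, ⁅Ee K, W (j+1)⁆ = (((j:K)+1) * ((n:K)-j)) • W j

lemma cc_gt {j : ℕ} (hj : n < j) : cc β j = 0 := by
  rw [cc, dif_neg (by omega)]

lemma cc_le {j : ℕ} (hj : j ≤ n) (x : V) : cc β j x = β.repr x ⟨j, by omega⟩ := by
  rw [cc, dif_pos hj]; rfl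

lemma cc_zero_of_gt' {j : ℕ} (hj : n < j) (x : V) : cc β j x = 0 := by
  rw [cc_gt β hj]; rfl

lemma cc_ext' {x y : V} (h : ∀ k, cc β k x = cc β k y) : x = y := by
  apply β.ext_elem
  intro i
  have := h i
  rwa [cc_le β (by omega), cc_le β (by omega)] at this

lemma cc_W (hβ : ∀ j : Fin (n+1), β j = W j) (k j : ℕ) (hj : j ≤ n) :
    cc β k (W j) = if k = j then 1 else 0 := by
  rcases le_or_gt k n with hk | hk
  · rw [cc_le β hk, ← hβ ⟨j, by omega⟩, β.repr_self]
    by_cases h : k = j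
    · subst h; rw [if_pos rfl, Finsupp.single_eq_same]
    · rw [if_neg h, Finsupp.single_apply, if_neg (by simp [Fin.ext_iff]; omega)]
  · rw [cc_gt β hk, if_neg (by omega)]; rfl

lemma expansion (hβ : ∀ j : Fin (n+1), β j = W j) (x : V) :
    x = ∑ j ∈ Finset.range (n+1), cc β j x • W j := by
  conv_lhs => rw [← β.sum_repr x]
  rw [← Fin.sum_univ_eq_sum_range (fun j => cc β j x • W j) (n+1)]
  apply Finset.sum_congr rfl
  intro i _
  rw [cc_le β (by omega), hβ i]

lemma W_zero (hg : Good β W) : ∀ j, n + 1 ≤ j → W j = 0 := by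
  intro j hj
  induction j with
  | zero => omega
  | succ j ih =>
    rcases Nat.lt_or_ge j (n+1) with h | h
    · have : j = n := by omega
      rw [this] at *; exact hg.hWtop
    · rw [← hg.hF, ih (by omega), lie_zero]

lemma cc_W3 (hg : Good β W) (k j : ℕ) :
    cc β k (W j) = if k = j ∧ j ≤ n then 1 else 0 := by
  rcases le_or_gt j n with hj | hj
  · rw [cc_W β W hg.hβ k j hj]
    by_cases h : k = j
    · simp [h, hj]
    · simp [h]
  · rw [W_zero β W hg j (by omega), map_zero, if_neg (by omega)]

end Coord


section CoordAction
variable {K : Type*} [Field K] {n : ℕ} {V : Type*} [AddCommGroup V] [Module K V]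
  [LieRingModule (LL K) V] [LieModule K (LL K) V]
  (β : Module.Basis (Fin (n+1)) K V) (W : ℕ → V)

lemma lie_sum' (x : LL K) (s : Finset ℕ) (f : ℕ → V) :
    ⁅x, ∑ j ∈ s, f j⁆ = ∑ j ∈ s, ⁅x, f j⁆ := by
  have := map_sum (toEnd K (LL K) V x) f s
  simpa only [toEnd_apply_apply] using this

lemma sum_ind (f : ℕ → K) (k : ℕ) :
    ∑ j ∈ Finset.range (n+1), f j * (if k = j ∧ j ≤ n then 1 else 0)
      = if k ≤ n then f k else 0 := by
  rcases le_or_gt k n with hk | hk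
  · rw [if_pos hk, Finset.sum_eq_single k]
    · rw [if_pos ⟨rfl, hk⟩, mul_one]
    · intro j _ hj
      rw [if_neg (by omega), mul_zero]
    · intro h
      exact absurd (Finset.mem_range.mpr (by omega)) h
  · rw [if_neg (by omega)]
    apply Finset.sum_eq_zero
    intro j hj
    rw [if_neg (by simp at hj; omega), mul_zero]

lemma ccH' (hg : Good β W) (x : V) (k : ℕ) : cc β k ⁅Hh K, x⁆ = ((n:K) - 2*k) * cc β k x := by
  obtain ⟨hβ, hWtop, hH, hF, hE0, hE⟩ := id hg
  conv_lhs => rw [expansion β W hβ x]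
  rw [lie_sum', map_sum]
  have : ∀ j ∈ Finset.range (n+1),
      cc β k (⁅Hh K, cc β j x • W j⁆)
        = (((n:K) - 2*j) * cc β j x) * (if k = j ∧ j ≤ n then 1 else 0) := by
    intro j _
    rw [lie_smul, hH, map_smul, map_smul, cc_W3 β W hg]
    simp [mul_comm, mul_assoc, mul_left_comm]
  rw [Finset.sum_congr rfl this, sum_ind]
  rcases le_or_gt k n with hk | hk
  · rw [if_pos hk]
  · rw [if_neg (by omega), cc_zero_of_gt' β hk, mul_zero]

lemma ccE' (hg : Good β W) (x : V) (k : ℕ) :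
    cc β k ⁅Ee K, x⁆ = ((k:K)+1) * ((n:K)-k) * cc β (k+1) x := by
  obtain ⟨hβ, hWtop, hH, hF, hE0, hE⟩ := id hg
  conv_lhs => rw [expansion β W hβ x]
  rw [lie_sum', map_sum, Finset.sum_range_succ']
  have h0 : cc β k ⁅Ee K, cc β 0 x • W 0⁆ = 0 := by
    rw [lie_smul, hE0, smul_zero, map_zero]
  rw [h0, add_zero]
  have key : ∀ i ∈ Finset.range n, cc β k ⁅Ee K, cc β (i+1) x • W (i+1)⁆
      = (((i:K)+1) * ((n:K)-i) * cc β (i+1) x) * (if k = i then 1 else 0) := by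
    intro i hi
    rw [lie_smul, hE, map_smul, smul_eq_mul, map_smul, smul_eq_mul,
      cc_W3 β W hg]
    by_cases h : k = i
    · rw [if_pos ⟨h, by simp at hi; omega⟩, if_pos h]; ring
    · rw [if_neg (by tauto), if_neg h]; ring
  rw [Finset.sum_congr rfl key]
  rcases lt_or_ge k n with hk | hk
  · rw [Finset.sum_eq_single k]
    · rw [if_pos rfl, mul_one]
    · intro j _ hj
      rw [if_neg (fun h => hj h.symm), mul_zero]
    · intro h
      exact absurd (Finset.mem_range.mpr hk) h
  · rw [Finset.sum_eq_zero (fun j hj => by rw [if_neg (by simp at hj; omega), mul_zero])]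
    rcases lt_or_ge n k with h2 | h2
    · rw [cc_zero_of_gt' β (by omega), mul_zero]
    · have : k = n := by omega
      subst this
      rw [sub_self, mul_zero, zero_mul]

lemma ccF0' (hg : Good β W) (x : V) : cc β 0 ⁅Ff K, x⁆ = 0 := by
  obtain ⟨hβ, hWtop, hH, hF, hE0, hE⟩ := id hg
  conv_lhs => rw [expansion β W hβ x]
  rw [lie_sum', map_sum]
  apply Finset.sum_eq_zero
  intro j _
  rw [lie_smul, hF, map_smul, smul_eq_mul, cc_W3 β W hg]
  rw [if_neg (by omega), mul_zero]

lemma ccF' (hg : Good β W) (x : V) (k : ℕ) (hk : k ≠ n) : cc β (k+1) ⁅Ff K, x⁆ = cc β k x := by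
  obtain ⟨hβ, hWtop, hH, hF, hE0, hE⟩ := id hg
  conv_lhs => rw [expansion β W hβ x]
  rw [lie_sum', map_sum]
  have key : ∀ j ∈ Finset.range (n+1),
      cc β (k+1) (⁅Ff K, cc β j x • W j⁆)
        = cc β j x * (if k = j ∧ j + 1 ≤ n then 1 else 0) := by
    intro j _
    rw [lie_smul, hF, map_smul, smul_eq_mul, cc_W3 β W hg]
    by_cases h : k = j ∧ j + 1 ≤ n
    · rw [if_pos ⟨by omega, by omega⟩, if_pos h]
    · rw [if_neg (by omega), if_neg h]
  rw [Finset.sum_congr rfl key]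
  rcases le_or_gt (k+1) n with hk2 | hk2
  · rw [Finset.sum_eq_single k]
    · rw [if_pos ⟨rfl, by omega⟩, mul_one]
    · intro j _ hj
      rw [if_neg (by omega), mul_zero]
    · intro h
      exact absurd (Finset.mem_range.mpr (by omega)) h
  · rw [Finset.sum_eq_zero, cc_zero_of_gt' β (by omega)]
    intro j hj
    rw [if_neg (by simp at hj; omega), mul_zero]


end CoordAction


section Der
variable {K : Type*} [Field K] {V : Type*} [AddCommGroup V] [Module K V]
  [LieRingModule (LL K) V] [LieModule K (LL K) V]

lemma mem_deltaDer_iff (D : LL K →ₗ[K] V) (δ : K) :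
    D ∈ deltaDer K (LL K) V δ ↔
      ∀ x y : LL K, D ⁅x, y⁆ = δ • ⁅x, D y⁆ - δ • ⁅y, D x⁆ :=
  Iff.rfl

lemma mem_of_three (D : (LL K) →ₗ[K] V) (δ : K)
    (h1 : D ⁅Ee K, Ff K⁆ = δ • ⁅Ee K, D (Ff K)⁆ - δ • ⁅Ff K, D (Ee K)⁆)
    (h2 : D ⁅Hh K, Ee K⁆ = δ • ⁅Hh K, D (Ee K)⁆ - δ • ⁅Ee K, D (Hh K)⁆)
    (h3 : D ⁅Hh K, Ff K⁆ = δ • ⁅Hh K, D (Ff K)⁆ - δ • ⁅Ff K, D (Hh K)⁆) :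
    D ∈ deltaDer K (LL K) V δ := by
  set B : (LL K) →ₗ[K] (LL K) →ₗ[K] V := LinearMap.mk₂ K
    (fun x y => D ⁅x, y⁆ - δ • ⁅x, D y⁆ + δ • ⁅y, D x⁆)
    (by intro x x' y; simp only [add_lie, lie_add, map_add, smul_add]; abel)
    (by intro c x y; simp only [smul_lie, lie_smul, map_smul, smul_add, smul_sub, smul_comm c δ])
    (by intro x y y'; simp only [add_lie, lie_add, map_add, smul_add]; abel)
    (by intro x c y; simp only [smul_lie, lie_smul, map_smul, smul_add, smul_sub, smul_comm _ δ])
    with hB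
  have hBapp : ∀ x y, B x y = D ⁅x, y⁆ - δ • ⁅x, D y⁆ + δ • ⁅y, D x⁆ := by
    intro x y; rw [hB]; rfl
  have hskew : ∀ x y, B x y = 0 → B y x = 0 := by
    intro x y h
    rw [hBapp] at h ⊢
    have : D ⁅y, x⁆ = - D ⁅x, y⁆ := by rw [← lie_skew, map_neg]
    rw [this]
    rw [← neg_zero, ← h]
    abel
  have bEE : B (Ee K) (Ee K) = 0 := by rw [hBapp]; simp
  have bFF : B (Ff K) (Ff K) = 0 := by rw [hBapp]; simp
  have bHH : B (Hh K) (Hh K) = 0 := by rw [hBapp]; simp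
  have bEF : B (Ee K) (Ff K) = 0 := by rw [hBapp, h1]; abel
  have bHE : B (Hh K) (Ee K) = 0 := by rw [hBapp, h2]; abel
  have bHF : B (Hh K) (Ff K) = 0 := by rw [hBapp, h3]; abel
  have bFE := hskew _ _ bEF
  have bEH := hskew _ _ bHE
  have bFH := hskew _ _ bHF
  intro x y
  have key : B x y = 0 := by
    conv_lhs => rw [decomp K x, decomp K y]
    simp only [map_add, map_smul, LinearMap.add_apply, LinearMap.smul_apply,
      bEE, bEF, bEH, bFE, bFF, bFH, bHE, bHF, bHH, smul_zero, add_zero]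
  have h'' := (hBapp x y).symm.trans key
  have h3' : D ⁅x, y⁆ + δ • ⁅y, D x⁆ = δ • ⁅x, D y⁆ := by
    rwa [sub_add_eq_add_sub, sub_eq_zero] at h''
  exact eq_sub_of_add_eq h3'



variable {K : Type*} [Field K] {V : Type*} [AddCommGroup V] [Module K V]
  [LieRingModule (LL K) V] [LieModule K (LL K) V]

/-- linear map determined by values on E, F, H -/
noncomputable def mkD (a b c : V) : (LL K) →ₗ[K] V where
  toFun x := x.val 0 1 • a + x.val 1 0 • b + x.val 0 0 • c
  map_add' x y := by
    show ((x + y).val 0 1) • a + _ + _ = _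
    have : (x + y).val = x.val + y.val := rfl
    rw [this]
    simp only [Matrix.add_apply, add_smul]
    abel
  map_smul' r x := by
    show ((r • x).val 0 1) • a + _ + _ = _
    have : (r • x).val = r • x.val := rfl
    rw [this]
    simp only [Matrix.smul_apply, smul_eq_mul, mul_smul, RingHom.id_apply, smul_add]

lemma mkD_E (a b c : V) : mkD a b c (Ee K) = a := by
  show (Ee K).val 0 1 • a + (Ee K).val 1 0 • b + (Ee K).val 0 0 • c = a
  rw [Ee01, Ee10, Ee00]
  simp

lemma mkD_F (a b c : V) : mkD a b c (Ff K) = b := by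
  show (Ff K).val 0 1 • a + (Ff K).val 1 0 • b + (Ff K).val 0 0 • c = b
  rw [Ff01, Ff10, Ff00]
  simp

lemma mkD_H (a b c : V) : mkD a b c (Hh K) = c := by
  show (Hh K).val 0 1 • a + (Hh K).val 1 0 • b + (Hh K).val 0 0 • c = c
  rw [Hh01, Hh10, Hh00]
  simp

end Der

section Der2
variable {K : Type*} [Field K] [CharZero K] {n : ℕ} {V : Type*} [AddCommGroup V] [Module K V]
  [LieRingModule (LL K) V] [LieModule K (LL K) V]
  (β : Module.Basis (Fin (n+1)) K V)

lemma hDH_of_mem (D : (LL K) →ₗ[K] V) {δ : K} (hD : D ∈ deltaDer K (LL K) V δ) :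
    D (Hh K) = δ • ⁅Ee K, D (Ff K)⁆ - δ • ⁅Ff K, D (Ee K)⁆ := by
  have := hD (Ee K) (Ff K)
  rwa [lie_Ee_Ff] at this

lemma rel (W : ℕ → V) (hg : Good β W) (hn : 1 ≤ n) (D : (LL K) →ₗ[K] V) (hD : D ∈ deltaDer K (LL K) V (-2/(n:K)))
    (k : ℕ) (hk : k + 2 ≤ n) :
    cc β k (D (Ee K)) = -(((k:K)+1)*((k:K)+2)) * cc β (k+2) (D (Ff K)) := by
  obtain ⟨m, hm⟩ : ∃ m, n = k + 2 + m := ⟨n - (k+2), by omega⟩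
  have hDH := hDH_of_mem D hD
  have h2 := hD (Hh K) (Ee K)
  rw [lie_Hh_Ee] at h2
  have e1 := congrArg (cc β k) h2
  simp only [map_nsmul, map_sub, map_smul, smul_eq_mul, nsmul_eq_mul, Nat.cast_ofNat,
    ccH' β W hg, ccE' β W hg] at e1
  rw [hDH] at e1
  simp only [map_sub, map_smul, smul_eq_mul, ccE' β W hg,
    ccF' β W hg (D (Ee K)) k (by omega : k ≠ n)] at e1
  have hcast : (n:K) = (k:K) + 2 + (m:K) := by rw [hm]; push_cast; ring
  rw [hcast] at e1
  have hm1 : ((m:K) + 1) ≠ 0 := Nat.cast_add_one_ne_zero m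
  have hm2 : ((m:K) + 2) ≠ 0 := by
    have : ((m:K) + 2) = (((m+2 : ℕ)):K) := by push_cast; ring
    rw [this]
    exact Nat.cast_ne_zero.mpr (by omega)
  have hn0 : ((k:K) + 2 + (m:K)) ≠ 0 := by
    have : ((k:K) + 2 + (m:K)) = (((k+2+m : ℕ)):K) := by push_cast; ring
    rw [this]
    exact Nat.cast_ne_zero.mpr (by omega)
  have hkey : (4*((k:K)+2+(m:K))^2*(((m:K)+2)*((m:K)+1)))*(cc β k (D (Ee K))
      + ((k:K)+1)*((k:K)+2)*cc β (k+2) (D (Ff K))) = 0 := by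
    rw [show k+1+1 = k+2 from rfl] at e1
    field_simp at e1
    push_cast at e1
    linear_combination (2*((k:K)+2+(m:K))^2) * e1
  have hc : (4*((k:K)+2+(m:K))^2*(((m:K)+2)*((m:K)+1))) ≠ 0 :=
    mul_ne_zero (mul_ne_zero (by norm_num) (pow_ne_zero _ hn0)) (mul_ne_zero hm2 hm1)
  have := (mul_eq_zero.mp hkey).resolve_left hc
  linear_combination this


lemma eq_zero_of (W : ℕ → V) (hg : Good β W) (hn : 1 ≤ n) (D : (LL K) →ₗ[K] V)
    (hD : D ∈ deltaDer K (LL K) V (-2/(n:K)))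
    (hb : D (Ff K) = 0) (h1 : cc β (n-1) (D (Ee K)) = 0)
    (h2 : cc β n (D (Ee K)) = 0) : D = 0 := by
  have ha : D (Ee K) = 0 := by
    apply cc_ext' β
    intro k
    rw [map_zero]
    rcases lt_or_ge (k+2) (n+1) with hklt | hkge
    · rw [rel β W hg hn D hD k (by omega), hb, map_zero, mul_zero]
    · by_cases hk1 : k = n - 1
      · rw [hk1]; exact h1
      · by_cases hk2 : k = n
        · rw [hk2]; exact h2
        · exact cc_zero_of_gt' β (by omega) _
  have hH0 : D (Hh K) = 0 := by
    rw [hDH_of_mem D hD, ha, hb]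
    simp
  ext x
  conv_lhs => rw [decomp K x]
  simp only [map_add, map_smul, ha, hb, hH0, smul_zero, add_zero, LinearMap.zero_apply]


lemma surj (W : ℕ → V) (hg : Good β W) (hn : 1 ≤ n) (b : V) (s t : K) :
    ∃ D ∈ deltaDer K (LL K) V (-2/(n:K)),
      D (Ff K) = b ∧ cc β (n-1) (D (Ee K)) = s ∧ cc β n (D (Ee K)) = t := by
  have hn0 : (n:K) ≠ 0 := Nat.cast_ne_zero.mpr (by omega)
  set δ : K := -2/(n:K) with hδ
  set avec : V := s • W (n-1) + t • W n
      + ∑ j ∈ Finset.range (n-1), (-(((j:K)+1)*((j:K)+2)) * cc β (j+2) b) • W j with havec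
  set cvec : V := δ • ⁅Ee K, b⁆ - δ • ⁅Ff K, avec⁆ with hcvec
  have hsum : ∀ (g : ℕ → K) (k : ℕ),
      cc β k (∑ j ∈ Finset.range (n-1), g j • W j) = if k < n-1 then g k else 0 := by
    intro g k
    rw [map_sum]
    simp only [map_smul, smul_eq_mul, cc_W3 β W hg]
    rcases lt_or_ge k (n-1) with h | h
    · rw [if_pos h, Finset.sum_eq_single k]
      · rw [if_pos ⟨rfl, by omega⟩, mul_one]
      · intro j _ hj; rw [if_neg (by omega), mul_zero]
      · intro hmem; exact absurd (Finset.mem_range.mpr h) hmem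
    · rw [if_neg (by omega)]
      apply Finset.sum_eq_zero
      intro j hj
      rw [if_neg (by simp at hj; omega), mul_zero]
  have hav1 : ∀ k, k + 2 ≤ n → cc β k avec = -(((k:K)+1)*((k:K)+2)) * cc β (k+2) b := by
    intro k hk
    rw [havec, map_add, map_add, map_smul, map_smul, smul_eq_mul, smul_eq_mul,
      cc_W3 β W hg, cc_W3 β W hg, hsum, if_neg (by omega), if_neg (by omega), if_pos (by omega)]
    ring
  have hav2 : cc β (n-1) avec = s := by
    rw [havec, map_add, map_add, map_smul, map_smul, smul_eq_mul, smul_eq_mul,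
      cc_W3 β W hg, cc_W3 β W hg, hsum, if_pos (by omega), if_neg (by omega), if_neg (by omega)]
    ring
  have hav3 : cc β n avec = t := by
    rw [havec, map_add, map_add, map_smul, map_smul, smul_eq_mul, smul_eq_mul,
      cc_W3 β W hg, cc_W3 β W hg, hsum, if_neg (by omega), if_pos (by omega), if_neg (by omega)]
    ring
  refine ⟨mkD avec b cvec, ?_, by rw [mkD_F], by rw [mkD_E]; exact hav2,
    by rw [mkD_E]; exact hav3⟩
  apply mem_of_three
  · rw [lie_Ee_Ff, mkD_H, mkD_E, mkD_F]
  · rw [lie_Hh_Ee, map_nsmul, mkD_E, mkD_H]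
    apply cc_ext' β
    intro k
    simp only [map_nsmul, map_sub, map_smul, nsmul_eq_mul, Nat.cast_ofNat, smul_eq_mul,
      ccH' β W hg, ccE' β W hg]
    rcases lt_or_ge n k with hk | hk
    · rw [cc_zero_of_gt' β hk avec, cc_zero_of_gt' β (show n < k+1 by omega) cvec]
      ring
    by_cases hkn : k = n
    · subst hkn
      rw [hav3, hδ]
      field_simp
      ring
    by_cases hkn1 : k + 1 = n
    · have hkc : (k:K) = (n:K) - 1 := by
        have h' : ((k+1:ℕ):K) = (n:K) := by exact_mod_cast congrArg (Nat.cast : ℕ → K) hkn1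
        push_cast at h'
        linear_combination h'
      have hav2k : cc β k avec = s := by
        rw [show k = n - 1 by omega]; exact hav2
      rw [hcvec, map_sub, map_smul, map_smul, smul_eq_mul, smul_eq_mul,
        ccE' β W hg b (k+1), ccF' β W hg avec k (by omega),
        cc_zero_of_gt' β (show n < k+1+1 by omega) b, hav2k, hδ, hkc]
      field_simp
      ring
    · rw [hcvec, map_sub, map_smul, map_smul, smul_eq_mul, smul_eq_mul,
        ccE' β W hg b (k+1), ccF' β W hg avec k (by omega)]
      simp only [show k+1+1 = k+2 from rfl]
      rw [hav1 k (by omega)]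
      push_cast
      rw [hδ]
      field_simp
      ring
  · rw [lie_Hh_Ff, map_neg, map_nsmul, mkD_F, mkD_H]
    apply cc_ext' β
    intro k
    simp only [map_neg, map_nsmul, map_sub, map_smul, nsmul_eq_mul, Nat.cast_ofNat,
      smul_eq_mul, ccH' β W hg]
    match k with
    | 0 =>
      rw [ccF0' β W hg, hδ]
      field_simp
      ring
    | (j+1) =>
      rcases lt_or_ge n (j+1) with hk | hk
      · rw [cc_zero_of_gt' β hk b, cc_zero_of_gt' β hk ⁅Ff K, cvec⁆]
        ring
      rw [ccF' β W hg cvec j (by omega), hcvec, map_sub, map_smul, map_smul, smul_eq_mul,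
        smul_eq_mul, ccE' β W hg b j]
      match j with
      | 0 =>
        rw [ccF0' β W hg, hδ]
        push_cast
        field_simp
        ring
      | (i+1) =>
        rw [ccF' β W hg avec i (by omega), hav1 i (by omega)]
        simp only [show i+1+1 = i+2 from rfl]
        push_cast
        rw [hδ]
        field_simp
        ring


noncomputable def Phi (β : Module.Basis (Fin (n+1)) K V) :
    ↥(deltaDer K (LL K) V (-2/(n:K))) →ₗ[K] V × K × K where
  toFun D := (D.1 (Ff K), cc β (n-1) (D.1 (Ee K)), cc β n (D.1 (Ee K)))
  map_add' D1 D2 := by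
    simp only [Submodule.coe_add, LinearMap.add_apply, map_add, Prod.mk_add_mk]
  map_smul' r D := by
    simp only [SetLike.val_smul, LinearMap.smul_apply, map_smul, Prod.smul_mk,
      RingHom.id_apply, smul_eq_mul]

lemma dim_eq (β : Module.Basis (Fin (n+1)) K V) (W : ℕ → V) (hg : Good β W) (hn : 1 ≤ n) :
    Module.finrank K ↥(deltaDer K (LL K) V (-2/(n:K))) = n + 3 := by
  haveI : FiniteDimensional K V := Module.Finite.of_basis β
  have hbij : Function.Bijective (Phi β) := by
    constructor
    · apply (injective_iff_map_eq_zero (Phi β)).mpr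
      intro D hD0
      rw [Prod.ext_iff] at hD0
      obtain ⟨h1, h23⟩ := hD0
      rw [Prod.ext_iff] at h23
      obtain ⟨h2, h3⟩ := h23
      apply Subtype.ext
      exact eq_zero_of β W hg hn D.1 D.2 h1 h2 h3
    · rintro ⟨b, s, t⟩
      obtain ⟨D, hD, hb, hs, ht⟩ := surj β W hg hn b s t
      refine ⟨⟨D, hD⟩, ?_⟩
      show (D (Ff K), cc β (n-1) (D (Ee K)), cc β n (D (Ee K))) = (b, s, t)
      rw [hb, hs, ht]
  have heq := LinearEquiv.finrank_eq (LinearEquiv.ofBijective (Phi β) hbij)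
  rw [heq, Module.finrank_prod, Module.finrank_prod, Module.finrank_self,
    Module.finrank_eq_card_basis β, Fintype.card_fin]


end Der2
end Sl2DD

/-- for an irreducible `(n+1)`-dimensional module `V` over `sl(2,K)` (`K`
algebraically closed of characteristic zero, `n ≥ 1`), the space of `(-2/n)`-derivations has
dimension `n+3`. -/
theorem deltaDer_sl2_neg_two_div_n
    (K : Type*) [Field K] [IsAlgClosed K] [CharZero K]
    (n : ℕ) (hn : 1 ≤ n)
    (V : Type*) [AddCommGroup V] [Module K V]
    [LieRingModule (LieAlgebra.SpecialLinear.sl (Fin 2) K) V]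
    [LieModule K (LieAlgebra.SpecialLinear.sl (Fin 2) K) V]
    [LieModule.IsIrreducible K (LieAlgebra.SpecialLinear.sl (Fin 2) K) V]
    (hdim : Module.finrank K V = n + 1) :
    Module.finrank K
      ↥(deltaDer K (LieAlgebra.SpecialLinear.sl (Fin 2) K) V (-2 / (n : K))) = n + 3 := by
  obtain ⟨W, β, hβ, hWtop, hH, hF, hE0, hE⟩ := Sl2DD.exists_basis K n V hn hdim
  exact Sl2DD.dim_eq β W ⟨hβ, hWtop, hH, hF, hE0, hE⟩ hn
end

section
/- Let K be an algebraically closed field of characteristic 0, n ≥ 1 an integer, V an irreducible sl(2,K)-module of dimension n+1, and δ ∈ K. If δ ≠ 1, δ ≠ −2/n, and δ ≠ 2/(n+2), then every δ-derivation of sl(2,K) with values in V is zero, i.e. Der_δ(sl(2,K), V) = 0. -/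
open LieModule LieAlgebra.SpecialLinear

/-! ### The standard `sl₂` triple inside `sl (Fin 2) K` -/

section Sl2Concrete
variable (K : Type*) [Field K] [CharZero K]

noncomputable def sE : sl (Fin 2) K :=
  ⟨!![0,1;0,0], show _ ∈ LinearMap.ker (Matrix.traceLinearMap (Fin 2) K K) from
    LinearMap.mem_ker.mpr (by simp [Matrix.trace_fin_two])⟩
noncomputable def sF : sl (Fin 2) K :=
  ⟨!![0,0;1,0], show _ ∈ LinearMap.ker (Matrix.traceLinearMap (Fin 2) K K) from
    LinearMap.mem_ker.mpr (by simp [Matrix.trace_fin_two])⟩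
noncomputable def sH : sl (Fin 2) K :=
  ⟨!![1,0;0,-1], show _ ∈ LinearMap.ker (Matrix.traceLinearMap (Fin 2) K K) from
    LinearMap.mem_ker.mpr (by simp [Matrix.trace_fin_two])⟩

theorem sl2_triple : IsSl2Triple (sH K) (sE K) (sF K) where
  h_ne_zero := by
    intro h
    have := congr_fun (congr_fun (congr_arg Subtype.val h) 0) 0
    simp [sH] at this
  lie_e_f := by
    apply Subtype.ext
    show (sE K).val * (sF K).val - (sF K).val * (sE K).val = _
    simp only [sE, sF, sH]
    ext i j; fin_cases i <;> fin_cases j <;> simp [Matrix.mul_apply, Fin.sum_univ_two]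
  lie_h_e_nsmul := by
    apply Subtype.ext
    show (sH K).val * (sE K).val - (sE K).val * (sH K).val = 2 • (sE K).val
    simp only [sE, sH]
    ext i j; fin_cases i <;> fin_cases j <;>
      norm_num [Matrix.mul_apply, Fin.sum_univ_two]
  lie_h_f_nsmul := by
    apply Subtype.ext
    show (sH K).val * (sF K).val - (sF K).val * (sH K).val = -(2 • (sF K).val)
    simp only [sF, sH]
    ext i j; fin_cases i <;> fin_cases j <;>
      norm_num [Matrix.mul_apply, Fin.sum_univ_two]

set_option linter.unusedSectionVars false in
theorem sl2_mem_span : ∀ x : sl (Fin 2) K, x ∈ Submodule.span K {sE K, sF K, sH K} := by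
  intro x
  have htr : Matrix.trace x.val = 0 := x.2
  rw [Matrix.trace_fin_two] at htr
  have hx : x = (x.val 0 1) • sE K + (x.val 1 0) • sF K + (x.val 0 0) • sH K := by
    apply Subtype.ext
    show x.val = _
    ext i j
    fin_cases i <;> fin_cases j <;>
      simp [sE, sF, sH, SetLike.val_smul] <;> linear_combination htr
  rw [hx]
  refine add_mem (add_mem ?_ ?_) ?_ <;>
    exact Submodule.smul_mem _ _ (Submodule.subset_span (by simp))

set_option linter.unusedSectionVars false in
theorem sl2_span_of (S : Set (sl (Fin 2) K))
    (hE : sE K ∈ Submodule.span K S) (hF : sF K ∈ Submodule.span K S)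
    (hH : sH K ∈ Submodule.span K S) :
    ∀ x : sl (Fin 2) K, x ∈ Submodule.span K S := by
  intro x
  refine Submodule.span_le.mpr ?_ (sl2_mem_span K x)
  rintro y (rfl | rfl | rfl) <;> assumption

end Sl2Concrete

/-! ### Generic lemmas on `sl₂`-representations -/

section Generic
variable {K L V : Type*} [Field K] [CharZero K] [LieRing L] [LieAlgebra K L]
  [AddCommGroup V] [Module K V] [LieRingModule L V] [LieModule K L V]
  {h e f : L}

theorem exists_primitive [IsAlgClosed K] [FiniteDimensional K V] [Nontrivial V]
    (t : IsSl2Triple h e f) : ∃ (m : V) (μ : K), t.HasPrimitiveVectorWith m μ := by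
  obtain ⟨α, hα⟩ := Module.End.exists_eigenvalue (toEnd K L V h)
  obtain ⟨w, hw⟩ := hα.exists_hasEigenvector
  have key : ∀ (k : ℕ),
      ⁅h, ((toEnd K L V e ^ k) w)⁆ = (α + 2 * k) • ((toEnd K L V e ^ k) w) := by
    intro k
    induction k with
    | zero => simpa using hw.apply_eq_smul
    | succ k ih =>
      have : ((toEnd K L V e ^ (k+1)) w) = ⁅e, ((toEnd K L V e ^ k) w)⁆ := by
        rw [pow_succ']; rfl
      rw [this, leibniz_lie h e, t.lie_h_e_smul K, ih, lie_smul, smul_lie]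
      push_cast
      module
  have hex : ∃ k : ℕ, (toEnd K L V e ^ k) w = 0 := by
    by_contra hcon
    push_neg at hcon
    have hli := (toEnd K L V h).eigenvectors_linearIndependent'
      (fun k : ℕ => α + 2 * k)
      (fun k l hkl => by field_simp at hkl; have h2 : 2 * k = 2 * l := (by exact_mod_cast add_left_cancel hkl); omega)
      (fun k => (toEnd K L V e ^ k) w)
      (fun k => ⟨Module.End.mem_eigenspace_iff.mpr (by simpa using key k), hcon k⟩)
    exact Module.Finite.not_linearIndependent_of_infinite _ hli
  classical
  let k := Nat.find hex
  have hk0 : k ≠ 0 := by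
    intro h0
    have := Nat.find_spec hex
    rw [show Nat.find hex = k from rfl, h0] at this
    simp at this
    exact hw.right this
  obtain ⟨j, hj⟩ : ∃ j, k = j + 1 := ⟨k - 1, by omega⟩
  refine ⟨(toEnd K L V e ^ j) w, α + 2 * j, ?_⟩
  refine ⟨?_, key j, ?_⟩
  · have := Nat.find_min hex (m := j) (by omega)
    exact this
  · have : ⁅e, ((toEnd K L V e ^ j) w)⁆ = (toEnd K L V e ^ (j+1)) w := by
      rw [pow_succ']; rfl
    rw [this, ← hj]
    exact Nat.find_spec hex

set_option linter.unusedSectionVars false in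
theorem span_top_and_finrank [LieModule.IsIrreducible K L V] [FiniteDimensional K V]
    (t : IsSl2Triple h e f)
    (hsp : ∀ x : L, x ∈ Submodule.span K ({h, e, f} : Set L))
    {m : V} {N : ℕ} (P : t.HasPrimitiveVectorWith m (N : K)) :
    Submodule.span K (Set.range fun i : Fin (N+1) => ((toEnd K L V f)^(i:ℕ)) m) = ⊤ ∧
      Module.finrank K V = N + 1 := by
  classical
  set ψ : ℕ → V := fun i => ((toEnd K L V f)^i) m with hψ
  set W : Submodule K V := Submodule.span K (Set.range fun i : Fin (N+1) => ψ i) with hW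
  have hmem : ∀ i : ℕ, i ≤ N → ψ i ∈ W := fun i hi =>
    Submodule.subset_span ⟨⟨i, by omega⟩, rfl⟩
  have hzero : ψ (N+1) = 0 := P.pow_toEnd_f_eq_zero_of_eq_nat rfl
  have hfψ : ∀ i : ℕ, ⁅f, ψ i⁆ = ψ (i+1) := P.lie_f_pow_toEnd_f
  have hgen : ∀ x ∈ ({h, e, f} : Set L), ∀ w ∈ W, ⁅x, w⁆ ∈ W := by
    rintro x hx w hw
    induction hw using Submodule.span_induction with
    | mem w hw =>
      obtain ⟨i, rfl⟩ := hw
      have hi : (i : ℕ) ≤ N := i.is_le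
      show ⁅x, ψ (i:ℕ)⁆ ∈ W
      rcases hx with rfl | rfl | rfl
      · rw [P.lie_h_pow_toEnd_f]
        exact W.smul_mem _ (hmem _ hi)
      · rcases eq_or_ne (i : ℕ) 0 with h0 | h0
        · rw [h0]
          simpa [ψ, P.lie_e] using W.zero_mem
        · obtain ⟨k, hk⟩ := Nat.exists_eq_succ_of_ne_zero h0
          rw [hk, P.lie_e_pow_succ_toEnd_f]
          exact W.smul_mem _ (hmem _ (by omega))
      · rw [hfψ]
        rcases Nat.lt_or_ge (i : ℕ) N with hlt | hge
        · exact hmem _ (by omega)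
        · have : (i : ℕ) = N := le_antisymm hi hge
          rw [this, hzero]
          exact W.zero_mem
    | zero => simp
    | add u v _ _ hu hv => rw [lie_add]; exact W.add_mem hu hv
    | smul c u _ hu => rw [lie_smul]; exact W.smul_mem c hu
  have hlie : ∀ (x : L) (w : V), w ∈ W → ⁅x, w⁆ ∈ W := by
    intro x
    have hx := hsp x
    induction hx using Submodule.span_induction with
    | mem x hx => exact fun w hw => hgen x hx w hw
    | zero => intro w hw; rw [zero_lie]; exact W.zero_mem
    | add u v _ _ hu hv => intro w hw; rw [add_lie]; exact W.add_mem (hu w hw) (hv w hw)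
    | smul c u _ hu => intro w hw; rw [smul_lie]; exact W.smul_mem c (hu w hw)
  set W' : LieSubmodule K L V := { W with lie_mem := fun {x w} hw => hlie x w hw } with hW'
  have hWtop : W = ⊤ := by
    have hne : W' ≠ ⊥ := by
      intro hbot
      apply P.ne_zero
      have hm : m ∈ W' := by
        show m ∈ W
        simpa [ψ] using hmem 0 (Nat.zero_le N)
      rw [hbot] at hm
      simpa using hm
    have := (IsSimpleOrder.eq_bot_or_eq_top W').resolve_left hne
    have h2 : (W' : Submodule K V) = (⊤ : LieSubmodule K L V) := by rw [this]
    exact h2.trans (by simp)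
  have hli : LinearIndependent K (fun i : Fin (N+1) => ψ i) := by
    apply (toEnd K L V h).eigenvectors_linearIndependent'
      (fun i : Fin (N+1) => (N : K) - 2 * i)
      (fun i j hij => by
        field_simp at hij
        exact Fin.ext (by exact_mod_cast mul_left_cancel₀ two_ne_zero (sub_right_inj.mp hij)))
    intro i
    constructor
    · exact Module.End.mem_eigenspace_iff.mpr (by simpa using P.lie_h_pow_toEnd_f i)
    · exact P.pow_toEnd_f_ne_zero_of_eq_nat rfl i.is_le
  refine ⟨hWtop, ?_⟩
  have hb : Module.finrank K V = Fintype.card (Fin (N+1)) := by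
    apply Module.finrank_eq_card_basis (Module.Basis.mk hli (by rw [← hW, hWtop]))
  simpa using hb

set_option linter.unusedSectionVars false in
theorem casimir_apply (t : IsSl2Triple h e f) {m : V} {N : ℕ}
    (P : t.HasPrimitiveVectorWith m (N : K))
    (hspan : Submodule.span K
      (Set.range fun i : Fin (N+1) => ((toEnd K L V f)^(i:ℕ)) m) = ⊤) :
    ∀ z : V, (2:K) • ⁅e, ⁅f, z⁆⁆ + (2:K) • ⁅f, ⁅e, z⁆⁆ + ⁅h, ⁅h, z⁆⁆
      = ((N:K) * ((N:K) + 2)) • z := by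
  set ψ : ℕ → V := fun i => ((toEnd K L V f)^i) m with hψ
  have hfψ : ∀ i : ℕ, ⁅f, ψ i⁆ = ψ (i+1) := P.lie_f_pow_toEnd_f
  intro z
  have hz : z ∈ Submodule.span K (Set.range fun i : Fin (N+1) => ψ i) := by
    rw [hspan]; trivial
  induction hz using Submodule.span_induction with
  | mem w hw =>
    obtain ⟨i, rfl⟩ := hw
    show (2:K) • ⁅e, ⁅f, ψ (i:ℕ)⁆⁆ + (2:K) • ⁅f, ⁅e, ψ (i:ℕ)⁆⁆ + ⁅h, ⁅h, ψ (i:ℕ)⁆⁆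
      = ((N:K) * ((N:K) + 2)) • ψ (i:ℕ)
    have h1 : ⁅e, ⁅f, ψ (i:ℕ)⁆⁆ = ((((i:ℕ):K)+1) * ((N:K) - ((i:ℕ):K))) • ψ (i:ℕ) := by
      rw [hfψ, P.lie_e_pow_succ_toEnd_f]
    have h2 : ⁅f, ⁅e, ψ (i:ℕ)⁆⁆ = ((i:ℕ) * ((N:K) + 1 - (i:ℕ))) • ψ (i:ℕ) := by
      rcases eq_or_ne (i:ℕ) 0 with h0 | h0
      · rw [h0]
        have : ⁅e, ψ 0⁆ = (0:V) := by simpa [ψ] using P.lie_e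
        rw [this]
        simp
      · obtain ⟨k, hk⟩ := Nat.exists_eq_succ_of_ne_zero h0
        rw [hk, P.lie_e_pow_succ_toEnd_f, lie_smul, hfψ]
        congr 1
        push_cast
        ring
    have h3 : ⁅h, ⁅h, ψ (i:ℕ)⁆⁆ = (((N:K) - 2*(i:ℕ)) * ((N:K) - 2*(i:ℕ))) • ψ (i:ℕ) := by
      rw [P.lie_h_pow_toEnd_f, lie_smul, P.lie_h_pow_toEnd_f, smul_smul]
    rw [h1, h2, h3, smul_smul, smul_smul, ← add_smul, ← add_smul]
    congr 1
    ring
  | zero => simp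
  | add u v _ _ hu hv =>
    simp only [lie_add, smul_add]
    rw [← hu, ← hv]
    abel
  | smul c u _ hu =>
    rw [lie_smul, lie_smul, lie_smul, lie_smul, lie_smul, lie_smul, smul_comm (2:K) c,
      smul_comm (2:K) c, ← smul_add, ← smul_add, hu, smul_smul, smul_smul, mul_comm]
end Generic

/-- for an irreducible `(n+1)`-dimensional module `V` over `sl(2,K)` (`K`
algebraically closed of characteristic zero, `n ≥ 1`), if `δ ≠ 1`, `δ ≠ -2/n` and
`δ ≠ 2/(n+2)`, then every `δ`-derivation of `sl(2,K)` with values in `V` is zero. -/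
theorem deltaDer_sl2_eq_bot
    (K : Type*) [Field K] [IsAlgClosed K] [CharZero K]
    (n : ℕ) (hn : 1 ≤ n)
    (V : Type*) [AddCommGroup V] [Module K V]
    [LieRingModule (LieAlgebra.SpecialLinear.sl (Fin 2) K) V]
    [LieModule K (LieAlgebra.SpecialLinear.sl (Fin 2) K) V]
    [LieModule.IsIrreducible K (LieAlgebra.SpecialLinear.sl (Fin 2) K) V]
    (hdim : Module.finrank K V = n + 1)
    (δ : K) (h1 : δ ≠ 1) (h2 : δ ≠ -2 / (n : K)) (h3 : δ ≠ 2 / ((n : K) + 2)) :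
    deltaDer K (LieAlgebra.SpecialLinear.sl (Fin 2) K) V δ = ⊥ := by
  haveI : FiniteDimensional K V := Module.finite_of_finrank_pos (by rw [hdim]; omega)
  haveI : Nontrivial V := Module.nontrivial_of_finrank_pos (R := K) (by rw [hdim]; omega)
  have t := sl2_triple K
  have hnK : (n : K) ≠ 0 := Nat.cast_ne_zero.mpr (by omega)
  have hsp0 : ∀ x, x ∈ Submodule.span K ({sH K, sE K, sF K} : Set (sl (Fin 2) K)) :=
    sl2_span_of K _ (Submodule.subset_span (by simp)) (Submodule.subset_span (by simp))
      (Submodule.subset_span (by simp))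
  -- Casimir setup
  obtain ⟨m, μ, P⟩ := exists_primitive (K := K) (V := V) t
  obtain ⟨N, hN⟩ := P.exists_nat
  rw [hN] at P
  obtain ⟨hspan, hrank⟩ := span_top_and_finrank t hsp0 P
  have hNn : n = N := by omega
  subst hNn
  have cas := casimir_apply t P hspan
  rw [eq_bot_iff]
  intro D hD
  simp only [Submodule.mem_bot]
  have hDrel : ∀ x y : sl (Fin 2) K, D ⁅x, y⁆ = δ • ⁅x, D y⁆ - δ • ⁅y, D x⁆ := hD
  suffices hsuff : D (sE K) = 0 ∧ D (sF K) = 0 ∧ D (sH K) = 0 by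
    obtain ⟨ha0, hb0, hc0⟩ := hsuff
    ext x
    rw [LinearMap.zero_apply]
    have hx := sl2_mem_span K x
    induction hx using Submodule.span_induction with
    | mem y hy => rcases hy with rfl | rfl | rfl; exacts [ha0, hb0, hc0]
    | zero => simp
    | add u v _ _ hu hv => rw [map_add, hu, hv, add_zero]
    | smul r u _ hu => rw [map_smul, hu, smul_zero]
  -- the three structural relations
  have R1 : δ • ⁅sH K, D (sE K)⁆ = (2:K) • D (sE K) + δ • ⁅sE K, D (sH K)⁆ := by
    have hr := hDrel (sH K) (sE K)
    rw [t.lie_h_e_smul K, map_smul] at hr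
    linear_combination (norm := module) -hr
  have R2 : δ • ⁅sH K, D (sF K)⁆ = δ • ⁅sF K, D (sH K)⁆ - (2:K) • D (sF K) := by
    have hr := hDrel (sH K) (sF K)
    rw [t.lie_lie_smul_f K, map_neg, map_smul] at hr
    linear_combination (norm := module) -hr
  have R3 : D (sH K) = δ • ⁅sE K, D (sF K)⁆ - δ • ⁅sF K, D (sE K)⁆ := by
    have hr := hDrel (sE K) (sF K)
    rwa [t.lie_e_f] at hr
  by_cases hδ : δ = 0
  · subst hδ
    have hc0 : D (sH K) = 0 := by
      linear_combination (norm := module) R3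
    have ha0 : D (sE K) = 0 := by
      have h2a : (2:K) • D (sE K) = 0 := by
        linear_combination (norm := module) -R1
      exact (smul_eq_zero.mp h2a).resolve_left two_ne_zero
    have hb0 : D (sF K) = 0 := by
      have h2b : (2:K) • D (sF K) = 0 := by
        linear_combination (norm := module) R2
      exact (smul_eq_zero.mp h2b).resolve_left two_ne_zero
    exact ⟨ha0, hb0, hc0⟩
  -- δ ≠ 0 case
  have H0 : ⁅sH K, D (sH K)⁆
      = δ • ⁅sH K, ⁅sE K, D (sF K)⁆⁆ - δ • ⁅sH K, ⁅sF K, D (sE K)⁆⁆ := by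
    conv_lhs => rw [R3]
    rw [lie_sub, lie_smul, lie_smul]
  have H2 : δ • ⁅sE K, ⁅sH K, D (sF K)⁆⁆
      = δ • ⁅sE K, ⁅sF K, D (sH K)⁆⁆ - (2:K) • ⁅sE K, D (sF K)⁆ := by
    rw [← lie_smul, R2, lie_sub, lie_smul, lie_smul]
  have H1 : δ • ⁅sF K, ⁅sH K, D (sE K)⁆⁆
      = (2:K) • ⁅sF K, D (sE K)⁆ + δ • ⁅sF K, ⁅sE K, D (sH K)⁆⁆ := by
    rw [← lie_smul, R1, lie_add, lie_smul, lie_smul]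
  have L1 : ⁅sH K, ⁅sE K, D (sF K)⁆⁆
      = (2:K) • ⁅sE K, D (sF K)⁆ + ⁅sE K, ⁅sH K, D (sF K)⁆⁆ := by
    rw [leibniz_lie, t.lie_h_e_smul K, smul_lie]
  have L2 : ⁅sH K, ⁅sF K, D (sE K)⁆⁆
      = -((2:K) • ⁅sF K, D (sE K)⁆) + ⁅sF K, ⁅sH K, D (sE K)⁆⁆ := by
    rw [leibniz_lie, t.lie_lie_smul_f K, neg_lie, smul_lie]
  have L3 : ⁅sH K, D (sH K)⁆
      = ⁅sE K, ⁅sF K, D (sH K)⁆⁆ - ⁅sF K, ⁅sE K, D (sH K)⁆⁆ := by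
    have h' : ⁅(⁅sE K, sF K⁆ : sl (Fin 2) K), D (sH K)⁆
        = ⁅sE K, ⁅sF K, D (sH K)⁆⁆ - ⁅sF K, ⁅sE K, D (sH K)⁆⁆ := lie_lie _ _ _
    rwa [t.lie_e_f] at h'
  have R4 : ⁅sH K, D (sH K)⁆
      = (-2:K) • ⁅sE K, D (sF K)⁆ + (-2:K) • ⁅sF K, D (sE K)⁆ := by
    have hcoef : δ * (1 - δ) ≠ 0 := mul_ne_zero hδ (sub_ne_zero.mpr (Ne.symm h1))
    apply smul_right_injective V hcoef
    show (δ * (1-δ)) • _ = (δ * (1-δ)) • _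
    linear_combination (norm := module) δ • H0 + (δ*δ) • L1 - (δ*δ) • L2 + δ • H2
      - δ • H1 - (δ*δ) • L3
  have E5 : (4*δ) • ⁅sF K, D (sE K)⁆ = -(δ • ⁅sH K, D (sH K)⁆) - (2:K) • D (sH K) := by
    linear_combination (norm := module) δ • R4 + (2:K) • R3
  have E6 : (4*δ) • ⁅sE K, D (sF K)⁆ = -(δ • ⁅sH K, D (sH K)⁆) + (2:K) • D (sH K) := by
    linear_combination (norm := module) δ • R4 - (2:K) • R3
  have HE5 : (4*δ) • ⁅sH K, ⁅sF K, D (sE K)⁆⁆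
      = -(δ • ⁅sH K, ⁅sH K, D (sH K)⁆⁆) - (2:K) • ⁅sH K, D (sH K)⁆ := by
    rw [← lie_smul, E5, lie_sub, lie_neg, lie_smul, lie_smul]
  have HE6 : (4*δ) • ⁅sH K, ⁅sE K, D (sF K)⁆⁆
      = -(δ • ⁅sH K, ⁅sH K, D (sH K)⁆⁆) + (2:K) • ⁅sH K, D (sH K)⁆ := by
    rw [← lie_smul, E6, lie_add, lie_neg, lie_smul, lie_smul]
  have FL : ⁅sF K, ⁅sH K, D (sE K)⁆⁆
      = (2:K) • ⁅sF K, D (sE K)⁆ + ⁅sH K, ⁅sF K, D (sE K)⁆⁆ := by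
    have hfh : ⁅sF K, sH K⁆ = (2:K) • sF K := by
      rw [← lie_skew, t.lie_lie_smul_f K, neg_neg]
    rw [leibniz_lie, hfh, smul_lie]
  have EL : ⁅sE K, ⁅sH K, D (sF K)⁆⁆
      = (-2:K) • ⁅sE K, D (sF K)⁆ + ⁅sH K, ⁅sE K, D (sF K)⁆⁆ := by
    have heh : ⁅sE K, sH K⁆ = (-2:K) • sE K := by
      rw [← lie_skew, t.lie_h_e_smul K]
      module
    rw [leibniz_lie, heh, smul_lie]
  have hI : (4*(δ*δ)) • ⁅sF K, ⁅sE K, D (sH K)⁆⁆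
      = -((δ*δ) • ⁅sH K, ⁅sH K, D (sH K)⁆⁆) - (2*(δ*δ)) • ⁅sH K, D (sH K)⁆
        - (4*δ) • D (sH K) + (4:K) • D (sH K) := by
    linear_combination (norm := module) (-(4*δ)) • H1 + (4*(δ*δ)) • FL + δ • HE5
      - ((2:K) - 2*δ) • E5
  have hII : (4*(δ*δ)) • ⁅sE K, ⁅sF K, D (sH K)⁆⁆
      = -((δ*δ) • ⁅sH K, ⁅sH K, D (sH K)⁆⁆) + (2*(δ*δ)) • ⁅sH K, D (sH K)⁆
        - (4*δ) • D (sH K) + (4:K) • D (sH K) := by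
    linear_combination (norm := module) (-(4*δ)) • H2 + (4*(δ*δ)) • EL + δ • HE6
      + ((2:K) - 2*δ) • E6
  have cc := cas (D (sH K))
  have final : (((n:K) * ((n:K)+2)) * (δ*δ) + 4*δ - 4) • D (sH K) = 0 := by
    linear_combination (norm := module) ((2:K)⁻¹) • hI + ((2:K)⁻¹) • hII - (δ*δ) • cc
  have hcoef : (((n:K) * ((n:K)+2)) * (δ*δ) + 4*δ - 4) ≠ 0 := by
    have hfac : (((n:K) * ((n:K)+2)) * (δ*δ) + 4*δ - 4)
        = ((n:K)*δ + 2) * (((n:K)+2)*δ - 2) := by ring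
    rw [hfac]
    apply mul_ne_zero
    · intro hz
      apply h2
      rw [eq_div_iff hnK]
      linear_combination hz
    · intro hz
      apply h3
      have hn2 : (n:K) + 2 ≠ 0 := by
        have : ((n+2 : ℕ) : K) ≠ 0 := Nat.cast_ne_zero.mpr (by omega)
        push_cast at this
        exact this
      rw [eq_div_iff hn2]
      linear_combination hz
  have hc0 : D (sH K) = 0 := (smul_eq_zero.mp final).resolve_left hcoef
  have h4δ : (4*δ) ≠ 0 := mul_ne_zero (by norm_num : (4:K) ≠ 0) hδ
  have hFa : ⁅sF K, D (sE K)⁆ = 0 := by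
    have h' : (4*δ) • ⁅sF K, D (sE K)⁆ = 0 := by rw [E5, hc0]; simp
    exact (smul_eq_zero.mp h').resolve_left h4δ
  have hEb : ⁅sE K, D (sF K)⁆ = 0 := by
    have h' : (4*δ) • ⁅sE K, D (sF K)⁆ = 0 := by rw [E6, hc0]; simp
    exact (smul_eq_zero.mp h').resolve_left h4δ
  have hHa : ⁅sH K, D (sE K)⁆ = (2/δ) • D (sE K) := by
    apply smul_right_injective V hδ
    show δ • _ = δ • _
    have hδ2 : δ * (2/δ) = 2 := by rw [mul_comm]; exact div_mul_cancel₀ _ hδ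
    rw [R1, hc0, lie_zero, smul_zero, add_zero, smul_smul, hδ2]
  have hHb : ⁅sH K, D (sF K)⁆ = (-2/δ) • D (sF K) := by
    apply smul_right_injective V hδ
    show δ • _ = δ • _
    have hδ2 : δ * (-2/δ) = -2 := by rw [mul_comm]; exact div_mul_cancel₀ _ hδ
    rw [R2, hc0, lie_zero, smul_zero, zero_sub, smul_smul, hδ2]
    module
  have ha0 : D (sE K) = 0 := by
    by_contra ha
    have P' : (t.symm).HasPrimitiveVectorWith (D (sE K)) (-2/δ : K) := by
      refine ⟨ha, ?_, hFa⟩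
      rw [neg_lie, hHa, ← neg_smul, neg_div]
    obtain ⟨M, hM⟩ := P'.exists_nat
    rw [hM] at P'
    have hsp' : ∀ x, x ∈ Submodule.span K ({-sH K, sF K, sE K} : Set (sl (Fin 2) K)) :=
      sl2_span_of K _ (Submodule.subset_span (by simp)) (Submodule.subset_span (by simp))
        (by
          have hneg : sH K = -(-sH K) := by rw [neg_neg]
          rw [hneg]
          exact neg_mem (Submodule.subset_span (by simp)))
    obtain ⟨_, hrank'⟩ := span_top_and_finrank t.symm hsp' P'
    have hMn : M = n := by omega
    apply h2
    rw [eq_div_iff hnK]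
    rw [hMn] at hM
    field_simp at hM
    linear_combination -hM
  have hb0 : D (sF K) = 0 := by
    by_contra hb
    have P' : t.HasPrimitiveVectorWith (D (sF K)) (-2/δ : K) := ⟨hb, hHb, hEb⟩
    obtain ⟨M, hM⟩ := P'.exists_nat
    rw [hM] at P'
    obtain ⟨_, hrank'⟩ := span_top_and_finrank t hsp0 P'
    have hMn : M = n := by omega
    apply h2
    rw [eq_div_iff hnK]
    rw [hMn] at hM
    field_simp at hM
    linear_combination -hM
  exact ⟨ha0, hb0, hc0⟩
end
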